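/- arXiv:1106.0871 — 2 statements merged into one kernel-verified Lean document; each statement's English description precedes it below -/
import Mathlib

section
/- Let w : ℕ → (0, ∞) be a function monotonically increasing to infinity. Then there exists a complete real-valued orthonormal system {φ_n}_{n∈ℕ} on 𝕋 = [0,1] and a constant C > 0 such that for all sufficiently large N and all real coefficients a_1, …, a_N, the function f = ∑_{n=1}^N a_n φ_n satisfies ‖S[f]‖_{L²(V²)} ≤ C w(N) (∑_{n=1}^N a_n²)^{1/2}. -/
open MeasureTheory Set Filter

noncomputable section

def Dy (j i : ℕ) : Set ℝ := Set.Ico ((i:ℝ)/2^j) (((i:ℝ)+1)/2^j)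

lemma measurableSet_Dy (j i : ℕ) : MeasurableSet (Dy j i) := measurableSet_Ico

lemma mem_Dy_iff {j i : ℕ} {x : ℝ} : x ∈ Dy j i ↔ (i:ℝ) ≤ 2^j * x ∧ 2^j * x < (i:ℝ)+1 := by
  have h : (0:ℝ) < 2^j := by positivity
  constructor
  · rintro ⟨h1, h2⟩
    constructor
    · rw [div_le_iff₀ h] at h1; linarith [h1]
    · rw [lt_div_iff₀ h] at h2; linarith [h2]
  · rintro ⟨h1, h2⟩
    exact ⟨by rw [div_le_iff₀ h]; linarith, by rw [lt_div_iff₀ h]; linarith⟩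

lemma Dy_disjoint {j i i' : ℕ} (h : i ≠ i') : Dy j i ∩ Dy j i' = ∅ := by
  ext x
  simp only [Set.mem_inter_iff, Set.mem_empty_iff_false, iff_false]
  rintro ⟨h1, h2⟩
  rw [mem_Dy_iff] at h1 h2
  rcases lt_or_gt_of_ne h with hlt | hlt
  · have : (i:ℝ) + 1 ≤ i' := by exact_mod_cast hlt
    linarith [h1.2, h2.1]
  · have : (i':ℝ) + 1 ≤ i := by exact_mod_cast hlt
    linarith [h1.1, h2.2]

lemma Dy_union (j i : ℕ) : Dy (j+1) (2*i) ∪ Dy (j+1) (2*i+1) = Dy j i := by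
  have hp : (2:ℝ)^(j+1) = 2*2^j := by ring
  ext x
  simp only [Set.mem_union, mem_Dy_iff, hp]
  push_cast
  constructor
  · rintro (⟨h1, h2⟩ | ⟨h1, h2⟩) <;> constructor <;> linarith
  · rintro ⟨h1, h2⟩
    rcases lt_or_ge (2*(2^j*x)) (2*i+1) with h | h
    · left; constructor <;> linarith
    · right; constructor <;> linarith

lemma Dy_nested {j J : ℕ} (hjJ : j ≤ J) (I : ℕ) : Dy J I ⊆ Dy j (I / 2^(J-j)) := by
  intro x hx
  rw [mem_Dy_iff] at hx ⊢
  set d : ℕ := 2^(J-j) with hd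
  have hdpos : 0 < d := Nat.pow_pos (by norm_num)
  have hdpos' : (0:ℝ) < (d:ℝ) := by exact_mod_cast hdpos
  have hJ : (2:ℝ)^J = 2^j * d := by
    rw [hd]; push_cast [← pow_add]; congr 1; omega
  have h1 : ((I / d : ℕ) : ℝ) * d ≤ (I:ℝ) := by
    exact_mod_cast Nat.div_mul_le_self I d
  have h2 : (I:ℝ) + 1 ≤ (((I / d : ℕ) : ℕ) + 1 : ℝ) * d := by
    have : I < (I / d + 1) * d := (Nat.div_lt_iff_lt_mul hdpos).mp (Nat.lt_succ_self _)
    exact_mod_cast this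
  constructor
  · calc ((I/d:ℕ):ℝ) ≤ (I:ℝ)/d := by
          rw [le_div_iff₀ hdpos']; exact h1
      _ ≤ 2^j * x := by
          rw [div_le_iff₀ hdpos']
          calc (I:ℝ) ≤ 2^J * x := hx.1
            _ = 2^j * x * d := by rw [hJ]; ring
  · calc 2^j * x = 2^J * x / d := by rw [hJ]; field_simp
      _ < ((I:ℝ)+1)/d := (div_lt_div_iff_of_pos_right hdpos').mpr hx.2
      _ ≤ ((I/d:ℕ):ℝ) + 1 := by
          rw [div_le_iff₀ hdpos']; exact h2

lemma volume_Dy (j i : ℕ) : volume (Dy j i) = ENNReal.ofReal ((2^j:ℝ)⁻¹) := by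
  rw [Dy, Real.volume_Ico]
  congr 1
  field_simp
  ring

lemma Dy_subset_unit {j i : ℕ} (hi : i < 2^j) : Dy j i ⊆ Set.Icc 0 1 := by
  intro x hx
  rw [mem_Dy_iff] at hx
  have h : (0:ℝ) < 2^j := by positivity
  have hi' : (i:ℝ) + 1 ≤ 2^j := by exact_mod_cast hi
  constructor
  · have h0 : (0:ℝ) ≤ (i:ℝ) := by positivity
    nlinarith [hx.1]
  · nlinarith [hx.2]

def haarF (j i : ℕ) : ℝ → ℝ := fun x =>
  Real.sqrt (2^j) * ((Dy (j+1) (2*i)).indicator 1 x - (Dy (j+1) (2*i+1)).indicator 1 x)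

lemma measurable_haarF (j i : ℕ) : Measurable (haarF j i) := by
  apply Measurable.const_mul
  exact ((measurable_const.indicator (measurableSet_Dy _ _)).sub
    (measurable_const.indicator (measurableSet_Dy _ _)))

lemma abs_haarF_le (j i : ℕ) (x : ℝ) : |haarF j i x| ≤ Real.sqrt (2^j) := by
  rw [haarF, abs_mul, abs_of_nonneg (Real.sqrt_nonneg _)]
  have h1 : |(Dy (j+1) (2*i)).indicator (1 : ℝ → ℝ) x - (Dy (j+1) (2*i+1)).indicator 1 x| ≤ 1 := by
    by_cases hx : x ∈ Dy (j+1) (2*i) <;> by_cases hx' : x ∈ Dy (j+1) (2*i+1) <;>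
      simp [Set.indicator, hx, hx']
  nlinarith [Real.sqrt_nonneg ((2:ℝ)^j), abs_nonneg ((Dy (j+1) (2*i)).indicator (1 : ℝ → ℝ) x - (Dy (j+1) (2*i+1)).indicator 1 x)]

lemma haarF_support {j i : ℕ} {x : ℝ} (h : haarF j i x ≠ 0) : x ∈ Dy j i := by
  rw [← Dy_union j i]
  by_contra hx
  simp only [Set.mem_union, not_or] at hx
  apply h
  rw [haarF, Set.indicator_of_notMem hx.1, Set.indicator_of_notMem hx.2]
  ring

lemma haarF_left {j i : ℕ} {x : ℝ} (h : x ∈ Dy (j+1) (2*i)) :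
    haarF j i x = Real.sqrt (2^j) := by
  have h2 : x ∉ Dy (j+1) (2*i+1) := by
    intro h'
    have hd := Dy_disjoint (j := j+1) (i := 2*i) (i' := 2*i+1) (by omega)
    exact absurd (Set.mem_inter h h') (by rw [hd]; exact Set.notMem_empty x)
  rw [haarF, Set.indicator_of_mem h, Set.indicator_of_notMem h2]
  simp

lemma haarF_right {j i : ℕ} {x : ℝ} (h : x ∈ Dy (j+1) (2*i+1)) :
    haarF j i x = -Real.sqrt (2^j) := by
  have h2 : x ∉ Dy (j+1) (2*i) := by
    intro h'
    have hd := Dy_disjoint (j := j+1) (i := 2*i) (i' := 2*i+1) (by omega)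
    exact absurd (Set.mem_inter h' h) (by rw [hd]; exact Set.notMem_empty x)
  rw [haarF, Set.indicator_of_mem h, Set.indicator_of_notMem h2]
  simp

lemma haarF_sq (j i : ℕ) (x : ℝ) :
    haarF j i x * haarF j i x = (2^j : ℝ) * (Dy j i).indicator 1 x := by
  by_cases hx : x ∈ Dy j i
  · have hx' := hx
    rw [← Dy_union j i] at hx'
    rcases hx' with h | h
    · rw [haarF_left h, Set.indicator_of_mem hx, ← Real.sqrt_mul_self (by positivity : (0:ℝ) ≤ 2^j)]
      simp
    · rw [haarF_right h, Set.indicator_of_mem hx]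
      rw [neg_mul_neg, ← Real.sqrt_mul_self (by positivity : (0:ℝ) ≤ 2^j)]
      simp
  · have h0 : haarF j i x = 0 := by
      by_contra h; exact hx (haarF_support h)
    rw [h0, Set.indicator_of_notMem hx]
    ring


local notation "μ01" => volume.restrict (Set.Icc (0:ℝ) 1)

lemma isFiniteMeasure_mu01 : IsFiniteMeasure μ01 := by
  constructor
  rw [Measure.restrict_apply_univ, Real.volume_Icc]
  norm_num

lemma integrable_of_bounded01 {f : ℝ → ℝ} (hf : Measurable f) (C : ℝ) (h : ∀ x, |f x| ≤ C) :
    Integrable f μ01 := by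
  have := isFiniteMeasure_mu01
  refine ⟨hf.aestronglyMeasurable, ?_⟩
  apply MeasureTheory.HasFiniteIntegral.of_bounded (C := C)
  filter_upwards with x using h x

lemma integrable_indicator01 {s : Set ℝ} (hs : MeasurableSet s) :
    Integrable (s.indicator (1 : ℝ → ℝ)) μ01 := by
  apply integrable_of_bounded01 (measurable_const.indicator hs) 1
  intro x
  by_cases hx : x ∈ s
  · rw [Set.indicator_of_mem hx]; exact abs_one.le
  · rw [Set.indicator_of_notMem hx]; norm_num

lemma integrable_haarF01 (j i : ℕ) : Integrable (haarF j i) μ01 :=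
  integrable_of_bounded01 (measurable_haarF j i) _ (abs_haarF_le j i)

lemma setIntegral_indicator_one {s : Set ℝ} (hs : MeasurableSet s) (hsub : s ⊆ Set.Icc 0 1) :
    ∫ x, s.indicator 1 x ∂μ01 = (volume s).toReal := by
  rw [MeasureTheory.integral_indicator hs]
  simp only [Pi.one_apply]
  rw [MeasureTheory.setIntegral_const, measureReal_def, Measure.restrict_apply hs,
    Set.inter_eq_self_of_subset_left hsub, smul_eq_mul, mul_one]

lemma integral_haarF01 {j i : ℕ} (hi : i < 2^j) : ∫ x, haarF j i x ∂μ01 = 0 := by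
  have hL : (2*i) < 2^(j+1) := by rw [pow_succ]; omega
  have hR : (2*i+1) < 2^(j+1) := by rw [pow_succ]; omega
  unfold haarF
  rw [integral_const_mul _ _]
  rw [MeasureTheory.integral_sub (integrable_indicator01 (measurableSet_Dy _ _))
    (integrable_indicator01 (measurableSet_Dy _ _))]
  rw [setIntegral_indicator_one (measurableSet_Dy _ _) (Dy_subset_unit hL),
    setIntegral_indicator_one (measurableSet_Dy _ _) (Dy_subset_unit hR),
    volume_Dy, volume_Dy]
  ring

lemma integral_haarF_sq01 {j i : ℕ} (hi : i < 2^j) :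
    ∫ x, haarF j i x * haarF j i x ∂μ01 = 1 := by
  have h : (fun x => haarF j i x * haarF j i x) = fun x => (2^j:ℝ) * (Dy j i).indicator 1 x :=
    funext (haarF_sq j i)
  rw [h, integral_const_mul _ _,
    setIntegral_indicator_one (measurableSet_Dy _ _) (Dy_subset_unit hi), volume_Dy,
    ENNReal.toReal_ofReal (by positivity)]
  field_simp

lemma integral_haarF_mul_same_level01 {j i i' : ℕ} (h : i ≠ i') :
    ∫ x, haarF j i x * haarF j i' x ∂μ01 = 0 := by
  have hz : (fun x => haarF j i x * haarF j i' x) = fun _ => (0:ℝ) := by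
    funext x
    by_cases h1 : haarF j i x = 0
    · rw [h1, zero_mul]
    by_cases h2 : haarF j i' x = 0
    · rw [h2, mul_zero]
    exfalso
    have hx1 := haarF_support h1
    have hx2 := haarF_support h2
    have := Dy_disjoint (j := j) h
    exact absurd (Set.mem_inter hx1 hx2) (by rw [this]; exact Set.notMem_empty x)
  rw [hz]
  simp

lemma haarF_const_on {j j' i i' : ℕ} (h : j < j') :
    ∃ c : ℝ, ∀ x, haarF j i x * haarF j' i' x = c * haarF j' i' x := by
  have hsub : Dy j' i' ⊆ Dy (j+1) (i' / 2^(j' - (j+1))) := Dy_nested (by omega) i'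
  set q := i' / 2^(j' - (j+1)) with hq
  have key : ∀ c : ℝ, (∀ x ∈ Dy j' i', haarF j i x = c) →
      ∀ x, haarF j i x * haarF j' i' x = c * haarF j' i' x := by
    intro c hc x
    by_cases h0 : haarF j' i' x = 0
    · rw [h0, mul_zero, mul_zero]
    · rw [hc x (haarF_support h0)]
  by_cases h1 : q = 2*i
  · exact ⟨Real.sqrt (2^j), key _ (fun x hx => haarF_left (h1 ▸ hsub hx))⟩
  by_cases h2 : q = 2*i+1
  · exact ⟨-Real.sqrt (2^j), key _ (fun x hx => haarF_right (h2 ▸ hsub hx))⟩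
  refine ⟨0, key 0 (fun x hx => ?_)⟩
  by_contra h0
  have hxd := haarF_support h0
  rw [← Dy_union j i] at hxd
  have hxq := hsub hx
  rcases hxd with hd | hd
  · have := Dy_disjoint (j := j+1) (i := q) (i' := 2*i) h1
    exact absurd (Set.mem_inter hxq hd) (by rw [this]; exact Set.notMem_empty x)
  · have := Dy_disjoint (j := j+1) (i := q) (i' := 2*i+1) h2
    exact absurd (Set.mem_inter hxq hd) (by rw [this]; exact Set.notMem_empty x)

lemma integral_haarF_mul_cross01 {j j' i i' : ℕ} (h : j < j') (hi' : i' < 2^j') :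
    ∫ x, haarF j i x * haarF j' i' x ∂μ01 = 0 := by
  obtain ⟨c, hc⟩ := haarF_const_on (i := i) (i' := i') h
  have : (fun x => haarF j i x * haarF j' i' x) = fun x => c * haarF j' i' x := funext hc
  rw [this, integral_const_mul _ _, integral_haarF01 hi', mul_zero]

lemma integral_one01 : ∫ x, (1:ℝ) ∂μ01 = 1 := by
  rw [MeasureTheory.integral_const, measureReal_def, Measure.restrict_apply_univ, Real.volume_Icc]
  norm_num

lemma integral_mul_indicator01 {g : ℝ → ℝ} (hg : Integrable g μ01) {s : Set ℝ}
    (hs : MeasurableSet s) :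
    ∫ x, g x * s.indicator 1 x ∂μ01 = ∫ x in s, g x ∂μ01 := by
  rw [← MeasureTheory.integral_indicator hs]
  congr 1
  funext x
  by_cases hx : x ∈ s <;> simp [Set.indicator, hx]

lemma integral_mul_haarF01 {g : ℝ → ℝ} (hg : Integrable g μ01) (j i : ℕ) :
    ∫ x, g x * haarF j i x ∂μ01 =
      Real.sqrt (2^j) * ((∫ x in Dy (j+1) (2*i), g x ∂μ01) - ∫ x in Dy (j+1) (2*i+1), g x ∂μ01) := by
  have h : (fun x => g x * haarF j i x) =
      fun x => Real.sqrt (2^j) * (g x * (Dy (j+1) (2*i)).indicator 1 x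
        - g x * (Dy (j+1) (2*i+1)).indicator 1 x) := by
    funext x; rw [haarF]; ring
  rw [h, integral_const_mul _ _]
  have hgi : ∀ (s : Set ℝ), MeasurableSet s → Integrable (fun x => g x * s.indicator 1 x) μ01 := by
    intro s hs
    have : (fun x => g x * s.indicator 1 x) = s.indicator g := by
      funext x; by_cases hx : x ∈ s <;> simp [Set.indicator, hx]
    rw [this]
    exact hg.indicator hs
  rw [MeasureTheory.integral_sub (hgi _ (measurableSet_Dy _ _)) (hgi _ (measurableSet_Dy _ _))]
  rw [integral_mul_indicator01 hg (measurableSet_Dy _ _),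
    integral_mul_indicator01 hg (measurableSet_Dy _ _)]

end
noncomputable section

variable (w : ℕ → ℝ) (hw : Filter.Tendsto w Filter.atTop Filter.atTop)

def Mfun (m : ℕ) : ℕ := ((hw.eventually_ge_atTop (Real.sqrt m)).exists).choose

lemma Mfun_spec (m : ℕ) : Real.sqrt m ≤ w (Mfun w hw m) :=
  ((hw.eventually_ge_atTop (Real.sqrt m)).exists).choose_spec

lemma w_sq_ge (hw_mono : Monotone w) {m n : ℕ} (h : Mfun w hw m ≤ n) : (m:ℝ) ≤ w n ^ 2 := by
  have h1 : Real.sqrt m ≤ w n := le_trans (Mfun_spec w hw m) (hw_mono h)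
  calc (m:ℝ) = Real.sqrt m ^ 2 := (Real.sq_sqrt (by positivity)).symm
    _ ≤ w n ^ 2 := by
        have := Real.sqrt_nonneg (m:ℝ)
        nlinarith

def Tfun (t : ℕ) : ℕ := 2*t + 2 + ∑ s ∈ Finset.range (t+1), Mfun w hw (2*s+6)

lemma Tfun_succ_ge (t : ℕ) : Tfun w hw t + 2 ≤ Tfun w hw (t+1) := by
  unfold Tfun
  rw [Finset.sum_range_succ (n := t+1)]
  omega

lemma Tfun_strictMono : StrictMono (Tfun w hw) :=
  strictMono_nat_of_lt_succ (fun t => by have := Tfun_succ_ge w hw t; omega)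

lemma Mfun_le_two_pow_Tfun (t : ℕ) : Mfun w hw (2*t+6) ≤ 2^(Tfun w hw t) := by
  have h1 : Mfun w hw (2*t+6) ≤ Tfun w hw t := by
    unfold Tfun
    have : Mfun w hw (2*t+6) ≤ ∑ s ∈ Finset.range (t+1), Mfun w hw (2*s+6) :=
      Finset.single_le_sum (f := fun s => Mfun w hw (2*s+6)) (fun _ _ => Nat.zero_le _)
        (Finset.self_mem_range_succ t)
    omega
  exact le_trans h1 (Nat.lt_two_pow_self (n := Tfun w hw t)).le

def pComp : ℕ → Prop := fun ℓ => ℓ ∉ Set.range (Tfun w hw)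

lemma pComp_infinite : (setOf (pComp w hw)).Infinite := by
  apply Set.infinite_of_injective_forall_mem (f := fun t => Tfun w hw t + 1)
  · intro a b hab
    simp only [add_left_inj] at hab
    exact (Tfun_strictMono w hw).injective hab
  · intro t
    show pComp w hw (Tfun w hw t + 1)
    simp only [Set.mem_setOf_eq, pComp, Set.mem_range, not_exists]
    intro s hs
    rcases le_or_gt s t with h | h
    · have := (Tfun_strictMono w hw).monotone h; omega
    · have h2 : t + 1 ≤ s := h
      have := (Tfun_strictMono w hw).monotone h2
      have := Tfun_succ_ge w hw t
      omega

def Lfun (k : ℕ) : ℕ :=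
  if k % 2 = 0 then Tfun w hw (k/2) else Nat.nth (pComp w hw) (k/2)

lemma nth_mem_pComp (t : ℕ) : Nat.nth (pComp w hw) t ∉ Set.range (Tfun w hw) :=
  Nat.nth_mem_of_infinite (pComp_infinite w hw) t

lemma Lfun_injective : Function.Injective (Lfun w hw) := by
  intro a b hab
  unfold Lfun at hab
  rcases Nat.even_or_odd a with ha | ha <;> rcases Nat.even_or_odd b with hb | hb
  · have ha' : a % 2 = 0 := Nat.even_iff.mp ha
    have hb' : b % 2 = 0 := Nat.even_iff.mp hb
    rw [if_pos ha', if_pos hb'] at hab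
    have := (Tfun_strictMono w hw).injective hab
    omega
  · have ha' : a % 2 = 0 := Nat.even_iff.mp ha
    have hb' : ¬ (b % 2 = 0) := by rw [Nat.odd_iff] at hb; omega
    rw [if_pos ha', if_neg hb'] at hab
    exact absurd ⟨a/2, hab⟩ (nth_mem_pComp w hw (b/2))
  · have ha' : ¬ (a % 2 = 0) := by rw [Nat.odd_iff] at ha; omega
    have hb' : b % 2 = 0 := Nat.even_iff.mp hb
    rw [if_neg ha', if_pos hb'] at hab
    exact absurd ⟨b/2, hab.symm⟩ (nth_mem_pComp w hw (a/2))
  · have ha' : ¬ (a % 2 = 0) := by rw [Nat.odd_iff] at ha; omega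
    have hb' : ¬ (b % 2 = 0) := by rw [Nat.odd_iff] at hb; omega
    rw [if_neg ha', if_neg hb'] at hab
    have := (Nat.nth_injective (pComp_infinite w hw)) hab
    rw [Nat.odd_iff] at ha hb
    omega

lemma Lfun_surjective : Function.Surjective (Lfun w hw) := by
  intro ℓ
  by_cases h : ℓ ∈ Set.range (Tfun w hw)
  · obtain ⟨t, ht⟩ := h
    exact ⟨2*t, by simp [Lfun, Nat.mul_div_cancel_left t (by norm_num : 0 < 2), ht]⟩
  · obtain ⟨t, ht⟩ := Nat.subset_range_nth (show ℓ ∈ setOf (pComp w hw) from h)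
    refine ⟨2*t+1, ?_⟩
    have h1 : (2*t+1) % 2 ≠ 0 := by omega
    have h2 : (2*t+1) / 2 = t := by omega
    rw [Lfun, if_neg h1, h2, ht]

lemma Lfun_even (t : ℕ) : Lfun w hw (2*t) = Tfun w hw t := by
  simp [Lfun, Nat.mul_div_cancel_left t (by norm_num : 0 < 2)]

def szf : ℕ → ℕ := fun k => match k with
  | 0 => 1
  | k+1 => 2^(Lfun w hw k)

lemma szf_pos (k : ℕ) : 0 < szf w hw k := by
  match k with
  | 0 => exact Nat.one_pos
  | k+1 => exact Nat.pow_pos (by norm_num)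

def Nsum (k : ℕ) : ℕ := ∑ j ∈ Finset.range (k+1), szf w hw j

lemma Nsum_zero : Nsum w hw 0 = 1 := by simp [Nsum, szf]

lemma Nsum_succ (k : ℕ) : Nsum w hw (k+1) = Nsum w hw k + szf w hw (k+1) :=
  Finset.sum_range_succ _ _

lemma Nsum_strictMono : StrictMono (Nsum w hw) :=
  strictMono_nat_of_lt_succ (fun k => by
    rw [Nsum_succ]; have := szf_pos w hw (k+1); omega)

lemma Nsum_ge (k : ℕ) : k + 1 ≤ Nsum w hw k := by
  induction k with
  | zero => rw [Nsum_zero]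
  | succ k ih => rw [Nsum_succ]; have := szf_pos w hw (k+1); omega

lemma blkn_exists (n : ℕ) : ∃ k, n ≤ Nsum w hw k :=
  ⟨n, le_trans (by omega) (Nsum_ge w hw n)⟩

def blkn (n : ℕ) : ℕ := Nat.find (blkn_exists w hw n)

lemma blkn_le (n : ℕ) : n ≤ Nsum w hw (blkn w hw n) := Nat.find_spec (blkn_exists w hw n)

lemma blkn_min {n k : ℕ} (h : k < blkn w hw n) : Nsum w hw k < n := by
  have := Nat.find_min (blkn_exists w hw n) h
  omega

lemma blkn_mono : Monotone (blkn w hw) := by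
  intro a b hab
  exact Nat.find_mono (fun k hk => le_trans hab hk)

lemma blkn_eq (t i : ℕ) (hi : i < szf w hw (t+1)) : blkn w hw (Nsum w hw t + 1 + i) = t + 1 := by
  have h1 : Nsum w hw t + 1 + i ≤ Nsum w hw (t+1) := by
    rw [Nsum_succ]; omega
  have h2 : ∀ k < t + 1, ¬ (Nsum w hw t + 1 + i ≤ Nsum w hw k) := by
    intro k hk
    have : Nsum w hw k ≤ Nsum w hw t := (Nsum_strictMono w hw).monotone (by omega)
    omega
  exact le_antisymm (Nat.find_le h1) (by
    by_contra h
    push_neg at h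
    exact h2 _ h (blkn_le w hw _))

lemma blkn_pos {n : ℕ} (hn : 2 ≤ n) : 1 ≤ blkn w hw n := by
  by_contra h
  push_neg at h
  interval_cases hb : blkn w hw n
  have := blkn_le w hw n
  rw [hb, Nsum_zero] at this
  omega

def lvl (n : ℕ) : ℕ := Lfun w hw (blkn w hw n - 1)

def posn (n : ℕ) : ℕ := n - Nsum w hw (blkn w hw n - 1) - 1

lemma posn_lt {n : ℕ} (hn : 2 ≤ n) : posn w hw n < 2^(lvl w hw n) := by
  have h1 := blkn_pos w hw hn
  have h2 := blkn_le w hw n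
  have h3 := blkn_min w hw (show blkn w hw n - 1 < blkn w hw n by omega)
  have heq : (blkn w hw n - 1) + 1 = blkn w hw n := by omega
  have h4 : Nsum w hw ((blkn w hw n - 1) + 1)
      = Nsum w hw (blkn w hw n - 1) + szf w hw ((blkn w hw n - 1) + 1) := Nsum_succ w hw _
  have h5 : szf w hw ((blkn w hw n - 1) + 1) = 2^(Lfun w hw (blkn w hw n - 1)) := rfl
  rw [heq] at h4 h5
  rw [posn, lvl]
  omega

lemma decomp_eq {n : ℕ} (hn : 2 ≤ n) :
    n = Nsum w hw (blkn w hw n - 1) + 1 + posn w hw n := by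
  have h1 := blkn_pos w hw hn
  have h3 := blkn_min w hw (show blkn w hw n - 1 < blkn w hw n by omega)
  rw [posn]
  omega

lemma pairs_inj {m n : ℕ} (hm : 2 ≤ m) (hn : 2 ≤ n)
    (h1 : lvl w hw m = lvl w hw n) (h2 : posn w hw m = posn w hw n) : m = n := by
  have hb : blkn w hw m = blkn w hw n := by
    have := Lfun_injective w hw h1
    have hbm := blkn_pos w hw hm
    have hbn := blkn_pos w hw hn
    omega
  rw [decomp_eq w hw hm, decomp_eq w hw hn, hb, h2]

lemma pairs_surj (j i : ℕ) (hi : i < 2^j) :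
    ∃ n, 2 ≤ n ∧ lvl w hw n = j ∧ posn w hw n = i := by
  obtain ⟨t, ht⟩ := Lfun_surjective w hw j
  refine ⟨Nsum w hw t + 1 + i, ?_, ?_, ?_⟩
  · have := Nsum_ge w hw t; omega
  · rw [lvl, blkn_eq w hw t i (by rw [show szf w hw (t+1) = 2^(Lfun w hw t) from rfl, ht]; omega)]
    simp [ht]
  · rw [posn, blkn_eq w hw t i (by rw [show szf w hw (t+1) = 2^(Lfun w hw t) from rfl, ht]; omega)]
    simp only [Nat.add_sub_cancel]
    omega

lemma growth_bound (hw_mono : Monotone w) {N : ℕ} (hN : Nsum w hw 1 + 1 ≤ N) :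
    ((blkn w hw N : ℝ) + 1) ≤ w N ^ 2 := by
  set k := blkn w hw N with hk
  have hk2 : 2 ≤ k := by
    rw [hk]
    by_contra h
    push_neg at h
    have h1 := blkn_le w hw N
    have : Nsum w hw (blkn w hw N) ≤ Nsum w hw 1 :=
      (Nsum_strictMono w hw).monotone (by omega)
    omega
  -- N > Nsum (k-1) ≥ szf of the biggest even-slot block below
  have hNsum : Nsum w hw (k-1) < N := blkn_min w hw (by omega)
  -- find t with 2t = k-2 or 2t = k-3
  rcases Nat.even_or_odd k with he | ho
  · -- k = 2t+2, block k-1 = 2t+1 has size 2^(Lfun (2t))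
    obtain ⟨t, ht⟩ : ∃ t, k = 2*t+2 := by
      rcases he with ⟨t, ht⟩; exact ⟨t-1, by omega⟩
    have hsz : szf w hw (2*t+1) ≤ Nsum w hw (k-1) := by
      rw [Nsum]
      exact Finset.single_le_sum (fun _ _ => Nat.zero_le _) (Finset.mem_range.mpr (by omega))
    have hM : Mfun w hw (2*t+6) ≤ N := by
      have h1 : Mfun w hw (2*t+6) ≤ 2^(Tfun w hw t) := Mfun_le_two_pow_Tfun w hw t
      have h2 : szf w hw (2*t+1) = 2^(Lfun w hw (2*t)) := rfl
      rw [Lfun_even] at h2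
      omega
    have := w_sq_ge w hw hw_mono hM
    have hcast : ((k:ℝ)+1) ≤ ((2*t+6 : ℕ) : ℝ) := by
      push_cast; rw_mod_cast [ht]; push_cast; linarith
    linarith
  · obtain ⟨t, ht⟩ : ∃ t, k = 2*t+3 := by
      rcases ho with ⟨t, ht⟩; exact ⟨t-1, by omega⟩
    have hsz : szf w hw (2*t+1) ≤ Nsum w hw (k-1) := by
      rw [Nsum]
      exact Finset.single_le_sum (fun _ _ => Nat.zero_le _) (Finset.mem_range.mpr (by omega))
    have hM : Mfun w hw (2*t+6) ≤ N := by
      have h1 : Mfun w hw (2*t+6) ≤ 2^(Tfun w hw t) := Mfun_le_two_pow_Tfun w hw t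
      have h2 : szf w hw (2*t+1) = 2^(Lfun w hw (2*t)) := rfl
      rw [Lfun_even] at h2
      omega
    have := w_sq_ge w hw hw_mono hM
    have hcast : ((k:ℝ)+1) ≤ ((2*t+6 : ℕ) : ℝ) := by
      push_cast; rw_mod_cast [ht]; push_cast; linarith
    linarith

end

section PhiF
variable (w : ℕ → ℝ) (hw : Filter.Tendsto w Filter.atTop Filter.atTop)

local notation "μ01" => volume.restrict (Set.Icc (0:ℝ) 1)

noncomputable def phiF (n : ℕ) : ℝ → ℝ :=
  if n = 0 then fun _ => 0
  else if n = 1 then fun _ => 1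
  else haarF (lvl w hw n) (posn w hw n)

lemma measurable_phiF (n : ℕ) : Measurable (phiF w hw n) := by
  unfold phiF
  split
  · exact measurable_const
  split
  · exact measurable_const
  · exact measurable_haarF _ _

lemma memℒp_phiF (n : ℕ) (hn : 1 ≤ n) : MemLp (phiF w hw n) 2 μ01 := by
  have hfin := isFiniteMeasure_mu01
  apply memLp_of_bounded (a := -(max 1 (Real.sqrt (2^(lvl w hw n))))) (b := max 1 (Real.sqrt (2^(lvl w hw n))))
  · filter_upwards with x
    unfold phiF
    have h0 : n ≠ 0 := by omega
    rw [if_neg h0]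
    split
    · refine ⟨le_trans ?_ zero_le_one, le_max_left 1 _⟩
      simp only [neg_nonpos]
      exact le_trans zero_le_one (le_max_left 1 _)
    · have := abs_haarF_le (lvl w hw n) (posn w hw n) x
      rw [abs_le] at this
      constructor
      · exact le_trans (neg_le_neg (le_max_right 1 _)) this.1
      · exact le_trans this.2 (le_max_right 1 _)
  · exact (measurable_phiF w hw n).aestronglyMeasurable

lemma phiF_orthonormal (m n : ℕ) (hm : 1 ≤ m) (hn : 1 ≤ n) :
    ∫ x, phiF w hw m x * phiF w hw n x ∂μ01 = if m = n then (1:ℝ) else 0 := by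
  have hm0 : m ≠ 0 := by omega
  have hn0 : n ≠ 0 := by omega
  by_cases hm1 : m = 1 <;> by_cases hn1 : n = 1
  · subst hm1; subst hn1
    rw [if_pos rfl]
    have h : (fun x => phiF w hw 1 x * phiF w hw 1 x) = fun _ => (1:ℝ) := by
      funext x; unfold phiF; norm_num
    rw [h, integral_one01]
  · have hn2 : 2 ≤ n := by omega
    rw [if_neg (by omega)]
    subst hm1
    have h : (fun x => phiF w hw 1 x * phiF w hw n x)
        = fun x => haarF (lvl w hw n) (posn w hw n) x := by
      funext x; unfold phiF; rw [if_neg hn0, if_neg (by omega : n ≠ 1), if_neg (by omega : (1:ℕ) ≠ 0), if_pos rfl]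
      ring
    rw [h, integral_haarF01 (posn_lt w hw hn2)]
  · have hm2 : 2 ≤ m := by omega
    rw [if_neg (by omega)]
    subst hn1
    have h : (fun x => phiF w hw m x * phiF w hw 1 x)
        = fun x => haarF (lvl w hw m) (posn w hw m) x := by
      funext x; unfold phiF; rw [if_neg hm0, if_neg (by omega : m ≠ 1), if_neg (by omega : (1:ℕ) ≠ 0), if_pos rfl]
      ring
    rw [h, integral_haarF01 (posn_lt w hw hm2)]
  · have hm2 : 2 ≤ m := by omega
    have hn2 : 2 ≤ n := by omega
    have h : (fun x => phiF w hw m x * phiF w hw n x)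
        = fun x => haarF (lvl w hw m) (posn w hw m) x * haarF (lvl w hw n) (posn w hw n) x := by
      funext x; unfold phiF; rw [if_neg hm0, if_neg hm1, if_neg hn0, if_neg hn1]
    rw [h]
    by_cases hmn : m = n
    · subst hmn
      rw [if_pos rfl]
      exact integral_haarF_sq01 (posn_lt w hw hm2)
    · rw [if_neg hmn]
      rcases lt_trichotomy (lvl w hw m) (lvl w hw n) with hl | hl | hl
      · exact integral_haarF_mul_cross01 hl (posn_lt w hw hn2)
      · have hpos : posn w hw m ≠ posn w hw n := by
          intro hp
          exact hmn (pairs_inj w hw hm2 hn2 hl hp)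
        rw [← hl]
        exact integral_haarF_mul_same_level01 hpos
      · have h2 : (fun x => haarF (lvl w hw m) (posn w hw m) x * haarF (lvl w hw n) (posn w hw n) x)
            = fun x => haarF (lvl w hw n) (posn w hw n) x * haarF (lvl w hw m) (posn w hw m) x := by
          funext x; ring
        rw [h2]
        exact integral_haarF_mul_cross01 hl (posn_lt w hw hm2)

end PhiF
section Complete

local notation "μ01" => volume.restrict (Set.Icc (0:ℝ) 1)

lemma integral_Dy_zero (g : ℝ → ℝ) (hgi : Integrable g μ01)
    (h1 : ∫ x, g x ∂μ01 = 0)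
    (hhaar : ∀ j i, i < 2^j → ∫ x, g x * haarF j i x ∂μ01 = 0) :
    ∀ j i, i < 2^j → ∫ x in Dy j i, g x ∂μ01 = 0 := by
  intro j
  induction j with
  | zero =>
    intro i hi
    have hi0 : i = 0 := by omega
    subst hi0
    have hDy : Dy 0 0 = Set.Ico (0:ℝ) 1 := by
      unfold Dy; norm_num
    rw [hDy]
    have hres : (μ01).restrict (Set.Ico (0:ℝ) 1) = μ01 := by
      rw [Measure.restrict_restrict measurableSet_Ico,
        Set.inter_eq_self_of_subset_left Set.Ico_subset_Icc_self]
      exact Measure.restrict_congr_set Ico_ae_eq_Icc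
    show ∫ x, g x ∂((μ01).restrict (Set.Ico (0:ℝ) 1)) = 0
    rw [hres, h1]
  | succ j ih =>
    intro i' hi'
    set i := i' / 2 with hidef
    have hi : i < 2^j := by
      have h2 : i' < 2^(j+1) := hi'
      rw [pow_succ] at h2
      omega
    have hAB := integral_mul_haarF01 hgi j i
    rw [hhaar j i hi] at hAB
    have hsqrt : (0:ℝ) < Real.sqrt (2^j) := by positivity
    have hdiff : (∫ x in Dy (j+1) (2*i), g x ∂μ01) = ∫ x in Dy (j+1) (2*i+1), g x ∂μ01 := by
      rcases mul_eq_zero.mp hAB.symm with h | h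
      · exact absurd h hsqrt.ne'
      · linarith [sub_eq_zero.mp h]
    have hsum : (∫ x in Dy (j+1) (2*i), g x ∂μ01) + (∫ x in Dy (j+1) (2*i+1), g x ∂μ01) = 0 := by
      rw [← MeasureTheory.setIntegral_union
        (Set.disjoint_iff_inter_eq_empty.mpr (Dy_disjoint (by omega)))
        (measurableSet_Dy _ _) hgi.integrableOn hgi.integrableOn]
      rw [Dy_union]
      exact ih i hi
    have hL : (∫ x in Dy (j+1) (2*i), g x ∂μ01) = 0 := by linarith
    have hR : (∫ x in Dy (j+1) (2*i+1), g x ∂μ01) = 0 := by linarith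
    rcases Nat.even_or_odd i' with he | ho
    · have hieq : i' = 2*i := by rcases he with ⟨t, ht⟩; omega
      rw [hieq]; exact hL
    · have hieq : i' = 2*i+1 := by rcases ho with ⟨t, ht⟩; omega
      rw [hieq]; exact hR

lemma integral_prefix_zero (g : ℝ → ℝ) (hgi : Integrable g μ01)
    (hDy : ∀ j i, i < 2^j → ∫ x in Dy j i, g x ∂μ01 = 0) :
    ∀ (j i : ℕ), i ≤ 2^j → ∫ x in Set.Ico (0:ℝ) ((i:ℝ)/2^j), g x ∂μ01 = 0 := by
  intro j i
  induction i with
  | zero =>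
    intro _
    simp
  | succ i ih =>
    intro hi
    have hii : i ≤ 2^j := by omega
    have hpos : (0:ℝ) < 2^j := by positivity
    have hu : Set.Ico (0:ℝ) ((i:ℝ)/2^j) ∪ Dy j i = Set.Ico (0:ℝ) (((i:ℝ)+1)/2^j) := by
      unfold Dy
      exact Set.Ico_union_Ico_eq_Ico (by positivity)
        ((div_le_div_iff_of_pos_right hpos).mpr (by linarith))
    have hcast : (((i+1:ℕ)):ℝ) = (i:ℝ)+1 := by push_cast; ring
    rw [hcast, ← hu,
      MeasureTheory.setIntegral_union (by unfold Dy; exact Set.Ico_disjoint_Ico_same)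
        (measurableSet_Dy _ _) hgi.integrableOn hgi.integrableOn,
      ih hii, hDy j i (by omega), add_zero]

lemma integral_Iic_zero (g : ℝ → ℝ) (hgi : Integrable g μ01)
    (hDy : ∀ j i, i < 2^j → ∫ x in Dy j i, g x ∂μ01 = 0)
    (h1 : ∫ x, g x ∂μ01 = 0) :
    ∀ x : ℝ, ∫ t in Set.Iic x, g t ∂μ01 = 0 := by
  set G : ℝ → ℝ := fun x => ∫ t in (0:ℝ)..x, g t ∂μ01 with hGdef
  have hGcont : Continuous G :=
    intervalIntegral.continuous_primitive (fun a b => hgi.intervalIntegrable) 0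
  have hIocIco : ∀ d : ℝ, 0 ≤ d → (∫ t in Set.Ioc (0:ℝ) d, g t ∂μ01) = ∫ t in Set.Ico (0:ℝ) d, g t ∂μ01 := by
    intro d hd
    apply MeasureTheory.setIntegral_congr_set
    have h1' : Set.Ioc (0:ℝ) d =ᵐ[volume] Set.Icc (0:ℝ) d := Ioc_ae_eq_Icc
    have h2' : Set.Ico (0:ℝ) d =ᵐ[volume] Set.Icc (0:ℝ) d := Ico_ae_eq_Icc
    exact ((h1'.trans h2'.symm)).filter_mono (MeasureTheory.ae_mono Measure.restrict_le_self)
  have hGd : ∀ j i : ℕ, i ≤ 2^j → G ((i:ℝ)/2^j) = 0 := by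
    intro j i hi
    have h0 : (0:ℝ) ≤ (i:ℝ)/2^j := by positivity
    rw [hGdef]
    simp only []
    rw [intervalIntegral.integral_of_le h0, hIocIco _ h0]
    exact integral_prefix_zero g hgi hDy j i hi
  have hG01 : ∀ x ∈ Set.Icc (0:ℝ) 1, G x = 0 := by
    intro x hx
    set d : ℕ → ℝ := fun j => ((⌊2^j * x⌋₊ : ℕ):ℝ)/2^j with hddef
    have hdle : ∀ j, d j ≤ x := by
      intro j
      have hpos : (0:ℝ) < 2^j := by positivity
      rw [hddef]
      simp only []
      rw [div_le_iff₀ hpos]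
      calc ((⌊2^j * x⌋₊ : ℕ):ℝ) ≤ 2^j * x := Nat.floor_le (mul_nonneg (by positivity) hx.1)
        _ = x * 2^j := by ring
    have hdge : ∀ j, x - (2⁻¹:ℝ)^j ≤ d j := by
      intro j
      have hpos : (0:ℝ) < 2^j := by positivity
      have h2 : 2^j * x < (⌊2^j * x⌋₊ : ℝ) + 1 := Nat.lt_floor_add_one _
      have hinv : ((2:ℝ)⁻¹)^j * 2^j = 1 := by rw [← mul_pow]; norm_num
      have key : (x - (2⁻¹:ℝ)^j) * 2^j ≤ (⌊2^j * x⌋₊:ℝ) := by nlinarith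
      calc x - (2⁻¹:ℝ)^j = ((x - (2⁻¹:ℝ)^j) * 2^j)/2^j := by field_simp
        _ ≤ ((⌊2^j * x⌋₊:ℝ))/2^j := (div_le_div_iff_of_pos_right hpos).mpr key
        _ = d j := by rw [hddef]
    have hdtend : Filter.Tendsto d Filter.atTop (nhds x) := by
      apply tendsto_of_tendsto_of_tendsto_of_le_of_le
        (g := fun j : ℕ => x - (2⁻¹:ℝ)^j) (h := fun _ => x) ?_ tendsto_const_nhds hdge hdle
      have h2 : Filter.Tendsto (fun j : ℕ => (2⁻¹:ℝ)^j) Filter.atTop (nhds 0) :=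
        tendsto_pow_atTop_nhds_zero_of_lt_one (by norm_num) (by norm_num)
      have := tendsto_const_nhds (x := x) (f := Filter.atTop (α := ℕ)) |>.sub h2
      simpa using this
    have hcomp : Filter.Tendsto (G ∘ d) Filter.atTop (nhds (G x)) :=
      (hGcont.tendsto x).comp hdtend
    have hzero : (G ∘ d) = fun _ => 0 := by
      funext j
      have hfl : ⌊2^j * x⌋₊ ≤ 2^j := by
        apply Nat.floor_le_of_le
        calc 2^j * x ≤ 2^j * 1 := by
              apply mul_le_mul_of_nonneg_left hx.2 (by positivity)
          _ = ((2^j : ℕ):ℝ) := by push_cast; ring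
      exact hGd j _ hfl
    rw [hzero] at hcomp
    exact (tendsto_nhds_unique tendsto_const_nhds hcomp).symm
  intro x
  rcases lt_or_ge x 0 with hx | hx
  · have hzero : (μ01) (Set.Iic x) = 0 := by
      rw [Measure.restrict_apply measurableSet_Iic]
      have : Set.Iic x ∩ Set.Icc (0:ℝ) 1 = ∅ := by
        ext t
        simp only [Set.mem_inter_iff, Set.mem_Iic, Set.mem_Icc, Set.mem_empty_iff_false, iff_false]
        rintro ⟨h1', h2', _⟩
        linarith
      rw [this, measure_empty]
    rw [show (μ01).restrict (Set.Iic x) = 0 from Measure.restrict_eq_zero.mpr hzero]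
    exact integral_zero_measure _
  · have hIic0 : ∫ t in Set.Iic (0:ℝ), g t ∂μ01 = 0 := by
      have hzero : (μ01) (Set.Iic 0) = 0 := by
        rw [Measure.restrict_apply measurableSet_Iic]
        have heq : Set.Iic (0:ℝ) ∩ Set.Icc 0 1 = {0} := by
          ext t
          simp only [Set.mem_inter_iff, Set.mem_Iic, Set.mem_Icc, Set.mem_singleton_iff]
          constructor
          · rintro ⟨h1', h2', _⟩; linarith
          · rintro rfl; norm_num
        rw [heq]
        exact measure_singleton 0
      rw [show (μ01).restrict (Set.Iic 0) = 0 from Measure.restrict_eq_zero.mpr hzero]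
      exact integral_zero_measure _
    have hIoc : ∫ t in Set.Ioc (0:ℝ) x, g t ∂μ01 = 0 := by
      rcases le_or_gt x 1 with hx1 | hx1
      · have := hG01 x ⟨hx, hx1⟩
        rw [hGdef] at this
        simp only [] at this
        rw [intervalIntegral.integral_of_le hx] at this
        exact this
      · have hsplit : Set.Ioc (0:ℝ) 1 ∪ Set.Ioc (1:ℝ) x = Set.Ioc (0:ℝ) x :=
          Set.Ioc_union_Ioc_eq_Ioc (by norm_num) (by linarith)
        have hright : ∫ t in Set.Ioc (1:ℝ) x, g t ∂μ01 = 0 := by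
          have hzero : (μ01) (Set.Ioc 1 x) = 0 := by
            rw [Measure.restrict_apply measurableSet_Ioc]
            have heq : Set.Ioc (1:ℝ) x ∩ Set.Icc 0 1 = ∅ := by
              ext t
              simp only [Set.mem_inter_iff, Set.mem_Ioc, Set.mem_Icc,
                Set.mem_empty_iff_false, iff_false]
              rintro ⟨⟨h1', _⟩, _, h2'⟩
              linarith
            rw [heq, measure_empty]
          rw [show (μ01).restrict (Set.Ioc 1 x) = 0 from Measure.restrict_eq_zero.mpr hzero]
          exact integral_zero_measure _
        have hleft : ∫ t in Set.Ioc (0:ℝ) 1, g t ∂μ01 = 0 := by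
          have := hG01 1 ⟨by norm_num, le_refl 1⟩
          rw [hGdef] at this
          simp only [] at this
          rw [intervalIntegral.integral_of_le (by norm_num : (0:ℝ) ≤ 1)] at this
          exact this
        rw [← hsplit,
          MeasureTheory.setIntegral_union (Set.Ioc_disjoint_Ioc_of_le le_rfl)
            measurableSet_Ioc hgi.integrableOn hgi.integrableOn, hleft, hright, add_zero]
    have hu : Set.Iic (0:ℝ) ∪ Set.Ioc 0 x = Set.Iic x := Set.Iic_union_Ioc_eq_Iic hx
    rw [← hu,
      MeasureTheory.setIntegral_union (Set.Iic_disjoint_Ioc (le_refl 0))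
        measurableSet_Ioc hgi.integrableOn hgi.integrableOn, hIic0, hIoc, add_zero]

end Complete

section Complete2

local notation "μ01" => volume.restrict (Set.Icc (0:ℝ) 1)

lemma ae_zero_of_integral_Iic_zero (g : ℝ → ℝ) (hgi : Integrable g μ01)
    (h1 : ∫ x, g x ∂μ01 = 0)
    (hIic : ∀ x : ℝ, ∫ t in Set.Iic x, g t ∂μ01 = 0) : g =ᵐ[μ01] 0 := by
  set νp := Measure.withDensity (volume.restrict (Set.Icc (0:ℝ) 1)) (fun x => ENNReal.ofReal (g x)) with hνp
  set νm := Measure.withDensity (volume.restrict (Set.Icc (0:ℝ) 1)) (fun x => ENNReal.ofReal (-(g x))) with hνm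
  have hbound : ∀ h : ℝ → ℝ, (∀ x, ENNReal.ofReal (h x) ≤ (‖g x‖₊ : ENNReal)) →
      (∫⁻ x, ENNReal.ofReal (h x) ∂μ01) ≠ ⊤ := by
    intro h hh
    apply ne_top_of_le_ne_top hgi.2.ne
    exact MeasureTheory.lintegral_mono hh
  have hple : ∀ x : ℝ, ENNReal.ofReal (g x) ≤ (‖g x‖₊ : ENNReal) := fun x =>
    Real.ofReal_le_enorm (g x)
  have hmle : ∀ x : ℝ, ENNReal.ofReal (-(g x)) ≤ (‖g x‖₊ : ENNReal) := fun x => by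
    have := Real.ofReal_le_enorm (-(g x))
    rwa [enorm_neg] at this
  have hfinp : IsFiniteMeasure νp := by
    constructor
    rw [hνp, withDensity_apply _ MeasurableSet.univ, Measure.restrict_univ]
    exact lt_top_iff_ne_top.mpr (hbound _ hple)
  have hfinm : IsFiniteMeasure νm := by
    constructor
    rw [hνm, withDensity_apply _ MeasurableSet.univ, Measure.restrict_univ]
    exact lt_top_iff_ne_top.mpr (hbound _ hmle)
  have key : ∀ s : Set ℝ, MeasurableSet s →
      ∫ t in s, g t ∂μ01 = (νp s).toReal - (νm s).toReal := by
    intro s hs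
    rw [hνp, hνm, withDensity_apply _ hs, withDensity_apply _ hs]
    exact MeasureTheory.integral_eq_lintegral_pos_part_sub_lintegral_neg_part hgi.integrableOn
  have hmeq : ∀ s : Set ℝ, MeasurableSet s → ∫ t in s, g t ∂μ01 = 0 → νp s = νm s := by
    intro s hs hz
    rw [key s hs] at hz
    have hp : νp s ≠ ⊤ := measure_ne_top νp s
    have hm : νm s ≠ ⊤ := measure_ne_top νm s
    exact (ENNReal.toReal_eq_toReal_iff' hp hm).mp (by linarith)
  have hext : νp = νm := by
    apply MeasureTheory.ext_of_generate_finite (Set.range Set.Iic)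
      ((BorelSpace.measurable_eq (α := ℝ)).trans (borel_eq_generateFrom_Iic ℝ)) isPiSystem_Iic
    · rintro s ⟨x, rfl⟩
      exact hmeq _ measurableSet_Iic (hIic x)
    · apply hmeq _ MeasurableSet.univ
      rw [Measure.restrict_univ]
      exact h1
  apply hgi.ae_eq_zero_of_forall_setIntegral_eq_zero
  intro s hs _
  rw [key s hs, hext]
  ring

end Complete2

section Complete3
variable (w : ℕ → ℝ) (hw : Filter.Tendsto w Filter.atTop Filter.atTop)

local notation "μ01" => volume.restrict (Set.Icc (0:ℝ) 1)

lemma phiF_complete (g : ℝ → ℝ) (hg : MemLp g 2 μ01)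
    (horth : ∀ n, 1 ≤ n → ∫ x, g x * phiF w hw n x ∂μ01 = 0) : g =ᵐ[μ01] 0 := by
  have hfin := isFiniteMeasure_mu01
  have hgi : Integrable g μ01 := hg.integrable one_le_two
  have h1 : ∫ x, g x ∂μ01 = 0 := by
    have := horth 1 le_rfl
    have heq : (fun x => g x * phiF w hw 1 x) = g := by
      funext x
      unfold phiF
      norm_num
    rwa [heq] at this
  have hhaar : ∀ j i, i < 2^j → ∫ x, g x * haarF j i x ∂μ01 = 0 := by
    intro j i hi
    obtain ⟨n, hn2, hl, hp⟩ := pairs_surj w hw j i hi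
    have := horth n (by omega)
    have heq : (fun x => g x * phiF w hw n x) = fun x => g x * haarF j i x := by
      funext x
      unfold phiF
      rw [if_neg (by omega : n ≠ 0), if_neg (by omega : n ≠ 1), hl, hp]
    rwa [heq] at this
  exact ae_zero_of_integral_Iic_zero g hgi h1
    (integral_Iic_zero g hgi (integral_Dy_zero g hgi h1 hhaar) h1)

end Complete3

/-- The square variation norm of the finite sequence `a 1, …, a N`. -/
noncomputable def sqVar (N : ℕ) (a : ℕ → ℝ) : ℝ :=
  sSup { r : ℝ | ∃ (m : ℕ) (c : ℕ → ℕ), StrictMono c ∧ c 0 = 0 ∧ c m = N ∧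
    r = Real.sqrt (∑ j ∈ Finset.range m,
      (∑ n ∈ Finset.Ioc (c j) (c (j + 1)), a n) ^ 2) }

section Final
variable (w : ℕ → ℝ) (hw : Filter.Tendsto w Filter.atTop Filter.atTop)

local notation "μ01" => volume.restrict (Set.Icc (0:ℝ) 1)

lemma sum_Ioc_parts (u : ℕ → ℝ) (c : ℕ → ℕ) (hc : Monotone c) (m : ℕ) :
    ∑ j ∈ Finset.range m, ∑ n ∈ Finset.Ioc (c j) (c (j+1)), u n
      = ∑ n ∈ Finset.Ioc (c 0) (c m), u n := by
  induction m with
  | zero => simp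
  | succ m ih =>
    rw [Finset.sum_range_succ, ih]
    exact Finset.sum_Ioc_consecutive u (hc (Nat.zero_le m)) (hc (Nat.le_succ m))

lemma count_nonzero_le (x : ℝ) (N : ℕ) :
    ((Finset.Icc 1 N).filter (fun n => phiF w hw n x ≠ 0)).card ≤ blkn w hw N + 1 := by
  classical
  have hblk1 : blkn w hw 1 = 0 := by
    have hb' : blkn w hw 1 ≤ 0 := Nat.find_le (by rw [Nsum_zero])
    omega
  have h := Finset.card_le_card_of_injOn (f := fun n => blkn w hw n)
    (s := (Finset.Icc 1 N).filter (fun n => phiF w hw n x ≠ 0))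
    (t := Finset.range (blkn w hw N + 1)) ?_ ?_
  · rwa [Finset.card_range] at h
  · intro n hn
    rw [Finset.mem_coe, Finset.mem_filter, Finset.mem_Icc] at hn
    exact Finset.mem_range.mpr (Nat.lt_succ_of_le (blkn_mono w hw hn.1.2))
  · intro n hn n' hn' hb
    have hb' : blkn w hw n = blkn w hw n' := hb
    simp only [Finset.coe_filter, Set.mem_setOf_eq, Finset.mem_Icc] at hn hn'
    by_cases h2 : 2 ≤ n
    · by_cases h2' : 2 ≤ n'
      · have hlvl : lvl w hw n = lvl w hw n' := by rw [lvl, lvl, hb']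
        by_cases hp : posn w hw n = posn w hw n'
        · exact pairs_inj w hw h2 h2' hlvl hp
        · exfalso
          have hφn : phiF w hw n x = haarF (lvl w hw n) (posn w hw n) x := by
            unfold phiF; rw [if_neg (by omega : n ≠ 0), if_neg (by omega : n ≠ 1)]
          have hφn' : phiF w hw n' x = haarF (lvl w hw n) (posn w hw n') x := by
            unfold phiF; rw [if_neg (by omega : n' ≠ 0), if_neg (by omega : n' ≠ 1), ← hlvl]
          have hx1 : x ∈ Dy (lvl w hw n) (posn w hw n) :=
            haarF_support (by rw [← hφn]; exact hn.2)
          have hx2 : x ∈ Dy (lvl w hw n) (posn w hw n') :=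
            haarF_support (by rw [← hφn']; exact hn'.2)
          have hde := Dy_disjoint (j := lvl w hw n) hp
          exact absurd (Set.mem_inter hx1 hx2) (by rw [hde]; exact Set.notMem_empty x)
      · have hn'1 : n' = 1 := by omega
        rw [hn'1, hblk1] at hb'
        have := blkn_pos w hw h2
        omega
    · have hn1 : n = 1 := by omega
      by_cases h2' : 2 ≤ n'
      · rw [hn1, hblk1] at hb'
        have := blkn_pos w hw h2'
        omega
      · omega

lemma sqVar_sq_le (x : ℝ) (N : ℕ) (a : ℕ → ℝ) :
    (sqVar N (fun n => a n * phiF w hw n x))^2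
      ≤ ((blkn w hw N + 1 : ℕ) : ℝ) * ∑ n ∈ Finset.Icc 1 N, (a n * phiF w hw n x)^2 := by
  classical
  set t : ℕ → ℝ := fun n => a n * phiF w hw n x with htdef
  set K : ℝ := ((blkn w hw N + 1 : ℕ) : ℝ) with hKdef
  set Y : ℝ := K * ∑ n ∈ Finset.Icc 1 N, t n ^2 with hYdef
  have hsumnn : (0:ℝ) ≤ ∑ n ∈ Finset.Icc 1 N, t n ^2 :=
    Finset.sum_nonneg (fun n _ => sq_nonneg _)
  have hKnn : (0:ℝ) ≤ K := by rw [hKdef]; positivity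
  have hY : 0 ≤ Y := mul_nonneg hKnn hsumnn
  have hIocIcc : Finset.Ioc 0 N = Finset.Icc 1 N := by
    ext n
    rw [Finset.mem_Ioc, Finset.mem_Icc]
    omega
  have hmain : ∀ r ∈ { r : ℝ | ∃ (m : ℕ) (c : ℕ → ℕ), StrictMono c ∧ c 0 = 0 ∧ c m = N ∧
      r = Real.sqrt (∑ j ∈ Finset.range m,
        (∑ n ∈ Finset.Ioc (c j) (c (j + 1)), t n) ^ 2) }, r ≤ Real.sqrt Y := by
    rintro r ⟨m, c, hmono, hc0, hcm, rfl⟩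
    apply Real.sqrt_le_sqrt
    have hterm : ∀ j ∈ Finset.range m,
        (∑ n ∈ Finset.Ioc (c j) (c (j+1)), t n)^2
          ≤ K * ∑ n ∈ Finset.Ioc (c j) (c (j+1)), t n ^2 := by
      intro j hj
      rw [Finset.mem_range] at hj
      set s := (Finset.Ioc (c j) (c (j+1))).filter (fun n => phiF w hw n x ≠ 0) with hsdef
      have hsum_eq : ∑ n ∈ s, t n = ∑ n ∈ Finset.Ioc (c j) (c (j+1)), t n := by
        apply Finset.sum_filter_of_ne
        intro n _ hne
        intro hz
        apply hne
        rw [htdef]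
        simp only [hz, mul_zero]
      have hCS : (∑ n ∈ s, t n)^2 ≤ (s.card : ℝ) * ∑ n ∈ s, t n^2 :=
        sq_sum_le_card_mul_sum_sq
      have hsub : s ⊆ (Finset.Icc 1 N).filter (fun n => phiF w hw n x ≠ 0) := by
        intro n hn
        rw [hsdef, Finset.mem_filter, Finset.mem_Ioc] at hn
        rw [Finset.mem_filter, Finset.mem_Icc]
        refine ⟨⟨by omega, ?_⟩, hn.2⟩
        calc n ≤ c (j+1) := hn.1.2
          _ ≤ c m := hmono.monotone (by omega)
          _ = N := hcm
      have hcard : (s.card : ℝ) ≤ K := by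
        rw [hKdef]
        have h1 : s.card ≤ ((Finset.Icc 1 N).filter (fun n => phiF w hw n x ≠ 0)).card :=
          Finset.card_le_card hsub
        have h2 := count_nonzero_le w hw x N
        exact_mod_cast le_trans h1 h2
      have hsq : ∑ n ∈ s, t n^2 ≤ ∑ n ∈ Finset.Ioc (c j) (c (j+1)), t n^2 :=
        Finset.sum_le_sum_of_subset_of_nonneg (Finset.filter_subset _ _)
          (fun n _ _ => sq_nonneg _)
      calc (∑ n ∈ Finset.Ioc (c j) (c (j+1)), t n)^2 = (∑ n ∈ s, t n)^2 := by rw [hsum_eq]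
        _ ≤ (s.card : ℝ) * ∑ n ∈ s, t n^2 := hCS
        _ ≤ K * ∑ n ∈ Finset.Ioc (c j) (c (j+1)), t n^2 := by
            apply mul_le_mul hcard hsq (Finset.sum_nonneg (fun n _ => sq_nonneg _)) hKnn
    calc ∑ j ∈ Finset.range m, (∑ n ∈ Finset.Ioc (c j) (c (j + 1)), t n) ^ 2
        ≤ ∑ j ∈ Finset.range m, K * ∑ n ∈ Finset.Ioc (c j) (c (j+1)), t n ^2 :=
          Finset.sum_le_sum hterm
      _ = K * ∑ j ∈ Finset.range m, ∑ n ∈ Finset.Ioc (c j) (c (j+1)), t n ^2 := by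
          rw [Finset.mul_sum]
      _ = K * ∑ n ∈ Finset.Ioc (c 0) (c m), t n ^2 := by
          rw [sum_Ioc_parts (fun n => t n ^2) c hmono.monotone m]
      _ = Y := by rw [hYdef, hc0, hcm, hIocIcc]
  have h0 : 0 ≤ sqVar N t := by
    apply Real.sSup_nonneg
    rintro r ⟨m, c, hmono, hc0, hcm, rfl⟩
    exact Real.sqrt_nonneg _
  have hle : sqVar N t ≤ Real.sqrt Y := Real.sSup_le hmain (Real.sqrt_nonneg _)
  calc sqVar N t ^2 ≤ Real.sqrt Y ^2 := by nlinarith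
    _ = Y := Real.sq_sqrt hY

lemma integrable_sum_sq (N : ℕ) (a : ℕ → ℝ) :
    Integrable (fun x => ∑ n ∈ Finset.Icc 1 N, (a n * phiF w hw n x)^2) μ01 := by
  have hfin := isFiniteMeasure_mu01
  apply MeasureTheory.integrable_finset_sum
  intro n hn
  rw [Finset.mem_Icc] at hn
  have heq : (fun x => (a n * phiF w hw n x)^2) = fun x => (a n)^2 * (phiF w hw n x)^2 := by
    funext x; ring
  rw [heq]
  exact ((memℒp_phiF w hw n hn.1).integrable_sq).const_mul _

lemma integral_sum_sq (N : ℕ) (a : ℕ → ℝ) :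
    ∫ x, ∑ n ∈ Finset.Icc 1 N, (a n * phiF w hw n x)^2 ∂μ01
      = ∑ n ∈ Finset.Icc 1 N, (a n)^2 := by
  have hfin := isFiniteMeasure_mu01
  rw [MeasureTheory.integral_finset_sum]
  · apply Finset.sum_congr rfl
    intro n hn
    rw [Finset.mem_Icc] at hn
    have heq : (fun x => (a n * phiF w hw n x)^2)
        = fun x => (a n)^2 * (phiF w hw n x * phiF w hw n x) := by
      funext x; ring
    rw [heq, integral_const_mul _ _, phiF_orthonormal w hw n n hn.1 hn.1, if_pos rfl, mul_one]
  · intro n hn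
    rw [Finset.mem_Icc] at hn
    have heq : (fun x => (a n * phiF w hw n x)^2) = fun x => (a n)^2 * (phiF w hw n x)^2 := by
      funext x; ring
    rw [heq]
    exact ((memℒp_phiF w hw n hn.1).integrable_sq).const_mul _

end Final

theorem exists_complete_ons_slow_sq_var_growth (w : ℕ → ℝ)
    (hw_pos : ∀ n, 0 < w n) (hw_mono : Monotone w)
    (hw_top : Filter.Tendsto w Filter.atTop Filter.atTop) :
    ∃ (φ : ℕ → ℝ → ℝ) (C : ℝ), 0 < C ∧
      (∀ n, Measurable (φ n)) ∧
      (∀ n, 1 ≤ n → MemLp (φ n) 2 (volume.restrict (Set.Icc (0:ℝ) 1))) ∧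
      (∀ m n, 1 ≤ m → 1 ≤ n →
        (∫ x in Set.Icc (0:ℝ) 1, φ m x * φ n x) = if m = n then (1:ℝ) else 0) ∧
      (∀ g : ℝ → ℝ,
        MemLp g 2 (volume.restrict (Set.Icc (0:ℝ) 1)) →
        (∀ n, 1 ≤ n → (∫ x in Set.Icc (0:ℝ) 1, g x * φ n x) = 0) →
        g =ᵐ[volume.restrict (Set.Icc (0:ℝ) 1)] 0) ∧
      ∃ N₀ : ℕ, ∀ N, N₀ ≤ N → ∀ a : ℕ → ℝ,
        Real.sqrt (∫ x in Set.Icc (0:ℝ) 1, (sqVar N fun n => a n * φ n x) ^ 2)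
          ≤ C * w N * Real.sqrt (∑ n ∈ Finset.Icc 1 N, a n ^ 2) := by
  refine ⟨phiF w hw_top, 1, one_pos, measurable_phiF w hw_top,
    (fun n hn => memℒp_phiF w hw_top n hn),
    (fun m n hm hn => phiF_orthonormal w hw_top m n hm hn),
    (fun g hg h => phiF_complete w hw_top g hg h),
    ⟨Nsum w hw_top 1 + 1, ?_⟩⟩
  intro N hN a
  have hblk : ((blkn w hw_top N : ℝ) + 1) ≤ w N ^ 2 := growth_bound w hw_top hw_mono hN
  set K : ℝ := ((blkn w hw_top N + 1 : ℕ) : ℝ) with hKdef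
  have hKnn : (0:ℝ) ≤ K := by rw [hKdef]; positivity
  have hsumnn : (0:ℝ) ≤ ∑ n ∈ Finset.Icc 1 N, a n ^ 2 :=
    Finset.sum_nonneg (fun n _ => sq_nonneg _)
  have hint : (∫ x in Set.Icc (0:ℝ) 1, (sqVar N fun n => a n * phiF w hw_top n x) ^ 2)
      ≤ K * ∑ n ∈ Finset.Icc 1 N, a n ^ 2 := by
    have hmono2 := MeasureTheory.integral_mono_of_nonneg
      (f := fun x => (sqVar N fun n => a n * phiF w hw_top n x) ^ 2)
      (g := fun x => K * ∑ n ∈ Finset.Icc 1 N, (a n * phiF w hw_top n x)^2)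
      (μ := volume.restrict (Set.Icc (0:ℝ) 1))
      (Filter.Eventually.of_forall (fun x => sq_nonneg _))
      ((integrable_sum_sq w hw_top N a).const_mul K)
      (Filter.Eventually.of_forall (fun x => sqVar_sq_le w hw_top x N a))
    rw [MeasureTheory.integral_const_mul, integral_sum_sq w hw_top N a] at hmono2
    exact hmono2
  have hsqrt1 : Real.sqrt (∫ x in Set.Icc (0:ℝ) 1, (sqVar N fun n => a n * phiF w hw_top n x) ^ 2)
      ≤ Real.sqrt (K * ∑ n ∈ Finset.Icc 1 N, a n ^ 2) := Real.sqrt_le_sqrt hint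
  have hsqrt2 : Real.sqrt (K * ∑ n ∈ Finset.Icc 1 N, a n ^ 2)
      = Real.sqrt K * Real.sqrt (∑ n ∈ Finset.Icc 1 N, a n ^ 2) := Real.sqrt_mul hKnn _
  have hsqrtK : Real.sqrt K ≤ w N := by
    have hKle : K ≤ w N ^ 2 := by
      rw [hKdef]; push_cast; linarith
    calc Real.sqrt K ≤ Real.sqrt (w N ^ 2) := Real.sqrt_le_sqrt hKle
      _ = w N := by rw [Real.sqrt_sq (hw_pos N).le]
  calc Real.sqrt (∫ x in Set.Icc (0:ℝ) 1, (sqVar N fun n => a n * phiF w hw_top n x) ^ 2)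
      ≤ Real.sqrt K * Real.sqrt (∑ n ∈ Finset.Icc 1 N, a n ^ 2) := by rw [← hsqrt2]; exact hsqrt1
    _ ≤ w N * Real.sqrt (∑ n ∈ Finset.Icc 1 N, a n ^ 2) :=
        mul_le_mul_of_nonneg_right hsqrtK (Real.sqrt_nonneg _)
    _ = 1 * w N * Real.sqrt (∑ n ∈ Finset.Icc 1 N, a n ^ 2) := by ring
end

section
/- There exists an absolute constant C > 0 with the following property. Let j ≥ 0 be an integer and let c_1, …, c_m be complex numbers with 2^{−j−1} < |c_i|² ≤ 2^{−j} for all i. Let X_1, X_2, … be independent random variables, each uniformly distributed on the list (c_1, …, c_m) (i.e., X equals c_U where U is uniform on {1, …, m}). For a subinterval I ⊆ {1, …, k}, let S_I := ∑_{i ∈ I} X_i. Then for every positive integer k and every real p > 2, 𝔼[ max_{I ⊆ {1,…,k}} |S_I − 𝔼[S_I]|^p ] ≤ C^p · k^{p/2} · p^{p/2} · 2^{−jp/2}, where the maximum is over all subintervals I of {1, …, k}. -/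
open MeasureTheory ProbabilityTheory

open Real in
lemma aux_exp_le (x : ℝ) : Real.exp x ≤ x + Real.exp (x^2) := by
  rcases le_or_gt |x| 1 with h | h
  · have hb := Real.exp_bound h (n := 2) (by norm_num)
    have h1 : Real.exp x - (1 + x) ≤ |x|^2 * (3/4) := by
      have : (∑ i ∈ Finset.range 2, x ^ i / i.factorial) = 1 + x := by
        simp [Finset.sum_range_succ]
      calc Real.exp x - (1 + x) ≤ |Real.exp x - (1+x)| := le_abs_self _
        _ ≤ |x|^2 * ((2:ℕ).succ / ((2:ℕ).factorial * 2)) := by rw [← this]; exact hb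
        _ = |x|^2 * (3/4) := by norm_num
    have h2 : |x|^2 = x^2 := sq_abs x
    have h3 : 1 + x^2 ≤ Real.exp (x^2) := Real.add_one_le_exp _ |>.trans_eq rfl |> fun h => by
      linarith [Real.add_one_le_exp (x^2)]
    nlinarith [sq_nonneg x]
  · rcases le_or_gt 0 x with hx | hx
    · have : x ≤ x^2 := by nlinarith [abs_of_nonneg hx]
      have := Real.exp_le_exp.2 this
      linarith
    · have h1 : Real.exp x ≤ 1 := Real.exp_le_one_iff.2 hx.le
      have h2 : 1 + x^2 ≤ Real.exp (x^2) := Real.add_one_le_exp _ |> fun h => by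
        linarith [Real.add_one_le_exp (x^2)]
      have h3 : -x ≤ x^2 := by nlinarith [abs_of_neg hx]
      linarith

open Real in
lemma aux_mgf {Ω : Type} [MeasurableSpace Ω] (μ : Measure Ω) [IsProbabilityMeasure μ]
    (Y : Ω → ℝ) (hY : Measurable Y) (b : ℝ) (hbd : ∀ᵐ ω ∂μ, |Y ω| ≤ b)
    (hmean : ∫ ω, Y ω ∂μ = 0) (l : ℝ) :
    ∫ ω, Real.exp (l * Y ω) ∂μ ≤ Real.exp (l^2 * b^2) := by
  have hYint : Integrable Y μ := by
    refine Integrable.mono' (integrable_const b) hY.aestronglyMeasurable ?_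
    filter_upwards [hbd] with ω h using by simpa using h
  have hgint : Integrable (fun ω => l * Y ω + Real.exp (l^2 * b^2)) μ :=
    (hYint.const_mul l).add (integrable_const _)
  have hmono : ∀ᵐ ω ∂μ, Real.exp (l * Y ω) ≤ l * Y ω + Real.exp (l^2 * b^2) := by
    filter_upwards [hbd] with ω h
    have h1 : Real.exp (l * Y ω) ≤ l * Y ω + Real.exp ((l * Y ω)^2) := aux_exp_le _
    have h2 : (l * Y ω)^2 ≤ l^2 * b^2 := by
      have : |Y ω|^2 ≤ b^2 := by
        have hb0 : 0 ≤ b := le_trans (abs_nonneg _) h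
        nlinarith [abs_nonneg (Y ω)]
      rw [mul_pow]
      nlinarith [sq_nonneg l, sq_abs (Y ω)]
    have h3 := Real.exp_le_exp.2 h2
    linarith
  calc ∫ ω, Real.exp (l * Y ω) ∂μ ≤ ∫ ω, (l * Y ω + Real.exp (l^2 * b^2)) ∂μ := by
        refine integral_mono_of_nonneg ?_ hgint hmono
        filter_upwards with ω using (Real.exp_pos _).le
    _ = l * ∫ ω, Y ω ∂μ + Real.exp (l^2 * b^2) := by
        rw [integral_add (hYint.const_mul l) (integrable_const _), MeasureTheory.integral_const_mul,
          integral_const]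
        simp
    _ = Real.exp (l^2 * b^2) := by rw [hmean]; ring

open Real in
lemma aux_mgf_sum {Ω : Type} [MeasurableSpace Ω] (μ : Measure Ω) [IsProbabilityMeasure μ]
    (Y : ℕ → Ω → ℝ) (hmeas : ∀ i, Measurable (Y i))
    (hind : iIndepFun 
      (fun i : {i : ℕ // 1 ≤ i} => Y i.val) μ)
    (b : ℝ) (hbd : ∀ i, 1 ≤ i → ∀ᵐ ω ∂μ, |Y i ω| ≤ b)
    (hmean : ∀ i, 1 ≤ i → ∫ ω, Y i ω ∂μ = 0)
    (s : Finset ℕ) (hs : ∀ i ∈ s, 1 ≤ i) (l : ℝ) :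
    ∫ ω, Real.exp (l * ∑ i ∈ s, Y i ω) ∂μ ≤ Real.exp (s.card * (l^2 * b^2)) := by
  classical
  set s' : Finset {i : ℕ // 1 ≤ i} := s.subtype _ with hs'
  have hsum : (∑ i ∈ s', (fun i : {i : ℕ // 1 ≤ i} => Y i.val) i) = fun ω => ∑ i ∈ s, Y i ω := by
    funext ω
    rw [Finset.sum_apply]
    exact Finset.sum_subtype_of_mem (fun i => Y i ω) hs
  have hcard : s'.card = s.card := by
    rw [hs', Finset.card_subtype, Finset.filter_true_of_mem hs]
  have hmgf : mgf (∑ i ∈ s', (fun i : {i : ℕ // 1 ≤ i} => Y i.val) i) μ l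
      = ∏ i ∈ s', mgf (Y i.val) μ l :=
    hind.mgf_sum (fun i => hmeas i.val) s'
  have hle : ∏ i ∈ s', mgf (Y i.val) μ l ≤ Real.exp (l^2*b^2) ^ s'.card := by
    rw [← Finset.prod_const]
    refine Finset.prod_le_prod (fun i _ => mgf_nonneg) (fun i _ => ?_)
    exact aux_mgf μ (Y i.val) (hmeas i.val) b (hbd i.val i.2) (hmean i.val i.2) l
  have : ∫ ω, Real.exp (l * ∑ i ∈ s, Y i ω) ∂μ
      = mgf (∑ i ∈ s', (fun i : {i : ℕ // 1 ≤ i} => Y i.val) i) μ l := by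
    rw [hsum]; rfl
  rw [this, hmgf]
  calc ∏ i ∈ s', mgf (Y i.val) μ l ≤ Real.exp (l^2*b^2) ^ s'.card := hle
    _ = Real.exp (s.card * (l^2 * b^2)) := by
        rw [← Real.exp_nat_mul, hcard]

open Real in
lemma aux_maximal {Ω : Type} [MeasurableSpace Ω] (μ : Measure Ω) [IsProbabilityMeasure μ]
    (Y : ℕ → Ω → ℝ) (hmeas : ∀ i, Measurable (Y i))
    (hind : iIndepFun 
      (fun i : {i : ℕ // 1 ≤ i} => Y i.val) μ)
    (b : ℝ) (hb : 0 < b) (hbd : ∀ i, 1 ≤ i → ∀ᵐ ω ∂μ, |Y i ω| ≤ b)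
    (hmean : ∀ i, 1 ≤ i → ∫ ω, Y i ω ∂μ = 0)
    (k : ℕ) (hk : 1 ≤ k) (t l : ℝ) (ht : 0 < t) (hl : 0 ≤ l) :
    (μ {ω | ∃ v, 1 ≤ v ∧ v ≤ k ∧ t ≤ ∑ i ∈ Finset.Ioc 0 v, Y i ω}).toReal
      ≤ Real.exp (-l*t + l^2 * (k:ℝ) * b^2) := by
  classical
  set R : ℕ → Ω → ℝ := fun w ω => ∑ i ∈ Finset.Ioc 0 w, Y i ω with hR
  have hRmeas : ∀ w, Measurable (R w) := fun w => Finset.measurable_sum _ fun i _ => hmeas i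
  have hYint : ∀ i, 1 ≤ i → Integrable (Y i) μ := by
    intro i hi
    refine Integrable.mono' (integrable_const b) (hmeas i).aestronglyMeasurable ?_
    filter_upwards [hbd i hi] with ω h using by simpa using h
  -- a.e. bound on all the Y i, i ≤ k
  have hb_all : ∀ᵐ ω ∂μ, ∀ i ∈ (↑(Finset.Ioc 0 k) : Set ℕ), |Y i ω| ≤ b := by
    rw [ae_ball_iff (Finset.Ioc 0 k : Finset ℕ).countable_toSet]
    intro i hi
    exact hbd i (Finset.mem_Ioc.1 hi).1
  have hsum_bd : ∀ ω, (∀ i ∈ (↑(Finset.Ioc 0 k) : Set ℕ), |Y i ω| ≤ b) →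
      ∀ s : Finset ℕ, s ⊆ Finset.Ioc 0 k → |∑ i ∈ s, Y i ω| ≤ (k:ℝ) * b := by
    intro ω hω s hsub
    calc |∑ i ∈ s, Y i ω| ≤ ∑ i ∈ s, |Y i ω| := Finset.abs_sum_le_sum_abs _ _
      _ ≤ ∑ _i ∈ s, b := Finset.sum_le_sum fun i hi => hω i (hsub hi)
      _ = s.card * b := by rw [Finset.sum_const, nsmul_eq_mul]
      _ ≤ (k:ℝ) * b := by
          have : s.card ≤ k := by
            simpa [Nat.card_Ioc] using Finset.card_le_card hsub
          exact mul_le_mul_of_nonneg_right (by exact_mod_cast this) hb.le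
  -- the exponential integrand is a.e. bounded
  have hexp_int : ∀ s : Finset ℕ, s ⊆ Finset.Ioc 0 k →
      Integrable (fun ω => Real.exp (l * ∑ i ∈ s, Y i ω)) μ := by
    intro s hsub
    refine Integrable.mono' (integrable_const (Real.exp (l * ((k:ℝ)*b))))
      ((Finset.measurable_sum _ fun i _ => hmeas i).const_mul l).exp.aestronglyMeasurable ?_
    filter_upwards [hb_all] with ω hω
    rw [Real.norm_eq_abs, abs_of_pos (Real.exp_pos _), Real.exp_le_exp]
    have h1 := hsum_bd ω hω s hsub
    have : ∑ i ∈ s, Y i ω ≤ (k:ℝ)*b := le_trans (le_abs_self _) h1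
    exact mul_le_mul_of_nonneg_left this hl
  -- first-crossing events
  set A : ℕ → Set Ω := fun v => {ω | t ≤ R v ω ∧ ∀ w ∈ Finset.Ico 1 v, R w ω < t} with hA
  have hAmeas : ∀ v, MeasurableSet (A v) := by
    intro v
    have : A v = {ω | t ≤ R v ω} ∩ ⋂ w ∈ (↑(Finset.Ico 1 v) : Set ℕ), {ω | R w ω < t} := by
      ext ω; simp [hA, Set.mem_iInter]
    rw [this]
    exact (measurableSet_le measurable_const (hRmeas v)).inter
      (MeasurableSet.biInter (Finset.Ico 1 v).countable_toSet
        fun w _ => measurableSet_lt (hRmeas w) measurable_const)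
  have hcover : {ω | ∃ v, 1 ≤ v ∧ v ≤ k ∧ t ≤ R v ω} = ⋃ v ∈ Finset.Icc 1 k, A v := by
    ext ω
    simp only [Set.mem_setOf_eq, Set.mem_iUnion, Finset.mem_Icc, exists_prop]
    constructor
    · rintro h
      have hex : ∃ v, 1 ≤ v ∧ v ≤ k ∧ t ≤ R v ω := h
      let v₀ := Nat.find hex
      have hv₀ := Nat.find_spec hex
      refine ⟨v₀, ⟨hv₀.1, hv₀.2.1⟩, hv₀.2.2, ?_⟩
      intro w hw
      rw [Finset.mem_Ico] at hw
      by_contra hcon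
      push_neg at hcon
      exact Nat.find_min hex hw.2 ⟨hw.1, le_trans (le_of_lt hw.2) hv₀.2.1 |>.trans (le_refl k) |>.trans (le_refl k) , hcon⟩
    · rintro ⟨v, ⟨h1, h2⟩, h3, _⟩
      exact ⟨v, h1, h2, h3⟩
  have hdisj0 : ∀ v v', 1 ≤ v → v < v' → Disjoint (A v) (A v') := by
    intro v v' h1 hlt
    refine Set.disjoint_left.2 fun ω hv hv' => ?_
    have h2 : R v ω < t := hv'.2 v (Finset.mem_Ico.2 ⟨h1, hlt⟩)
    linarith [hv.1]
  have hdisj : (↑(Finset.Icc 1 k) : Set ℕ).Pairwise (Function.onFun Disjoint A) := by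
    intro v hv v' hv' hne
    simp only [Finset.coe_Icc, Set.mem_Icc] at hv hv'
    rcases lt_or_gt_of_ne hne with h | h
    · exact hdisj0 v v' hv.1 h
    · exact (hdisj0 v' v hv'.1 h).symm
  -- per-event key bound
  have key : ∀ v, 1 ≤ v → v ≤ k → (μ (A v)).toReal * Real.exp (l*t)
      ≤ ∫ ω, Set.indicator (A v) (fun ω => Real.exp (l * R k ω)) ω ∂μ := by
    intro v hv1 hvk
    set S : Finset {i : ℕ // 1 ≤ i} := (Finset.Ioc 0 v).subtype (fun i => 1 ≤ i) with hS
    set T : Finset {i : ℕ // 1 ≤ i} := (Finset.Ioc v k).subtype (fun i => 1 ≤ i) with hT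
    have hST : Disjoint S T := by
      rw [Finset.disjoint_left]
      intro a haS haT
      rw [hS, Finset.mem_subtype, Finset.mem_Ioc] at haS
      rw [hT, Finset.mem_subtype, Finset.mem_Ioc] at haT
      omega
    have hmemS : ∀ n ∈ Finset.Ioc 0 v, 1 ≤ n := fun n hn => (Finset.mem_Ioc.1 hn).1
    have hmemT : ∀ n ∈ Finset.Ioc v k, 1 ≤ n := fun n hn => by
      have := (Finset.mem_Ioc.1 hn).1; omega
    have idS : ∀ ω, (∑ i : ↥S, Y ((i : {i : ℕ // 1 ≤ i}) : ℕ) ω) = R v ω := by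
      intro ω
      have h1 : (∑ i : ↥S, Y ((i : {i : ℕ // 1 ≤ i}) : ℕ) ω) = ∑ j ∈ S, Y (j : ℕ) ω := by
        rw [Finset.univ_eq_attach]
        exact Finset.sum_attach S (fun j : {i : ℕ // 1 ≤ i} => Y (j : ℕ) ω)
      have h2 : (∑ j ∈ S, Y (j : ℕ) ω) = ∑ n ∈ Finset.Ioc 0 v, Y n ω :=
        Finset.sum_subtype_of_mem (fun n => Y n ω) hmemS
      exact h1.trans h2
    have idP : ∀ w, w ≤ v → ∀ ω,
        (∑ i : ↥S, if ((i : {i : ℕ // 1 ≤ i}) : ℕ) ≤ w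
          then Y ((i : {i : ℕ // 1 ≤ i}) : ℕ) ω else 0) = R w ω := by
      intro w hwv ω
      have h1 : (∑ i : ↥S, if ((i : {i : ℕ // 1 ≤ i}) : ℕ) ≤ w
          then Y ((i : {i : ℕ // 1 ≤ i}) : ℕ) ω else 0)
          = ∑ j ∈ S, (if (j : ℕ) ≤ w then Y (j : ℕ) ω else 0) := by
        rw [Finset.univ_eq_attach]
        exact Finset.sum_attach S (fun j : {i : ℕ // 1 ≤ i} =>
          if (j : ℕ) ≤ w then Y (j : ℕ) ω else 0)
      have h2 : (∑ j ∈ S, (if (j : ℕ) ≤ w then Y (j : ℕ) ω else 0))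
          = ∑ n ∈ Finset.Ioc 0 v, (if n ≤ w then Y n ω else 0) :=
        Finset.sum_subtype_of_mem (fun n => if n ≤ w then Y n ω else 0) hmemS
      have h3 : (∑ n ∈ Finset.Ioc 0 v, (if n ≤ w then Y n ω else 0))
          = ∑ n ∈ Finset.Ioc 0 w, Y n ω := by
        rw [← Finset.sum_filter]
        have : (Finset.Ioc 0 v).filter (fun n => n ≤ w) = Finset.Ioc 0 w := by
          ext n
          simp only [Finset.mem_filter, Finset.mem_Ioc]
          omega
        rw [this]
      exact (h1.trans h2).trans h3
    have idT : ∀ ω, (∑ i : ↥T, Y ((i : {i : ℕ // 1 ≤ i}) : ℕ) ω)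
        = ∑ n ∈ Finset.Ioc v k, Y n ω := by
      intro ω
      have h1 : (∑ i : ↥T, Y ((i : {i : ℕ // 1 ≤ i}) : ℕ) ω) = ∑ j ∈ T, Y (j : ℕ) ω := by
        rw [Finset.univ_eq_attach]
        exact Finset.sum_attach T (fun j : {i : ℕ // 1 ≤ i} => Y (j : ℕ) ω)
      have h2 : (∑ j ∈ T, Y (j : ℕ) ω) = ∑ n ∈ Finset.Ioc v k, Y n ω :=
        Finset.sum_subtype_of_mem (fun n => Y n ω) hmemT
      exact h1.trans h2
    set B : Set (↥S → ℝ) := {y | t ≤ (∑ i : ↥S, y i) ∧ ∀ w ∈ Finset.Ico 1 v,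
      (∑ i : ↥S, if ((i : {i : ℕ // 1 ≤ i}) : ℕ) ≤ w then y i else 0) < t} with hB
    have hSumSm : Measurable (fun y : ↥S → ℝ => ∑ i : ↥S, y i) :=
      Finset.measurable_sum _ fun i _ => measurable_pi_apply i
    have hPartSm : ∀ w, Measurable (fun y : ↥S → ℝ =>
        (∑ i : ↥S, if ((i : {i : ℕ // 1 ≤ i}) : ℕ) ≤ w then y i else 0)) := by
      intro w
      refine Finset.measurable_sum _ fun i _ => ?_
      by_cases h : ((i : {i : ℕ // 1 ≤ i}) : ℕ) ≤ w
      · simpa [h] using measurable_pi_apply i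
      · simpa [h] using measurable_const
    have hBmeas : MeasurableSet B := by
      have : B = {y : ↥S → ℝ | t ≤ (∑ i : ↥S, y i)} ∩
          ⋂ w ∈ (↑(Finset.Ico 1 v) : Set ℕ),
            {y : ↥S → ℝ | (∑ i : ↥S, if ((i : {i : ℕ // 1 ≤ i}) : ℕ) ≤ w
              then y i else 0) < t} := by
        ext y; simp [hB]
      rw [this]
      exact (measurableSet_le measurable_const hSumSm).inter
        (MeasurableSet.biInter (Finset.Ico 1 v).countable_toSet
          fun w _ => measurableSet_lt (hPartSm w) measurable_const)
    have hAvB : A v = (fun ω (i : ↥S) => Y ((i : {i : ℕ // 1 ≤ i}) : ℕ) ω) ⁻¹' B := by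
      ext ω
      simp only [Set.mem_preimage, hB, Set.mem_setOf_eq, hA]
      constructor
      · rintro ⟨h1, h2⟩
        refine ⟨by rw [idS]; exact h1, fun w hw => ?_⟩
        rw [idP w (le_of_lt (Finset.mem_Ico.1 hw).2)]
        exact h2 w hw
      · rintro ⟨h1, h2⟩
        refine ⟨by rw [idS] at h1; exact h1, fun w hw => ?_⟩
        have := h2 w hw
        rwa [idP w (le_of_lt (Finset.mem_Ico.1 hw).2)] at this
    have hφm : Measurable (B.indicator (fun y : ↥S → ℝ => Real.exp (l * ∑ i : ↥S, y i))) :=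
      ((hSumSm.const_mul l).exp).indicator hBmeas
    have hψm : Measurable (fun y : ↥T → ℝ => Real.exp (l * ∑ i : ↥T, y i)) :=
      ((Finset.measurable_sum _ fun i _ => measurable_pi_apply i).const_mul l).exp
    have hIF : IndepFun (fun ω (i : ↥S) => Y ((i : {i : ℕ // 1 ≤ i}) : ℕ) ω)
        (fun ω (i : ↥T) => Y ((i : {i : ℕ // 1 ≤ i}) : ℕ) ω) μ :=
      hind.indepFun_finset S T hST (fun i => hmeas i.val)
    have hIndφψ : IndepFun
        (fun ω => B.indicator (fun y : ↥S → ℝ => Real.exp (l * ∑ i : ↥S, y i))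
          (fun i : ↥S => Y ((i : {i : ℕ // 1 ≤ i}) : ℕ) ω))
        (fun ω => Real.exp (l * ∑ i : ↥T, Y ((i : {i : ℕ // 1 ≤ i}) : ℕ) ω)) μ :=
      hIF.comp hφm hψm
    have hφF : ∀ ω, B.indicator (fun y : ↥S → ℝ => Real.exp (l * ∑ i : ↥S, y i))
          (fun i : ↥S => Y ((i : {i : ℕ // 1 ≤ i}) : ℕ) ω)
        = Set.indicator (A v) (fun ω => Real.exp (l * R v ω)) ω := by
      intro ω
      by_cases hω : ω ∈ A v
      · have hBω : (fun (i : ↥S) => Y ((i : {i : ℕ // 1 ≤ i}) : ℕ) ω) ∈ B := by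
          rw [hAvB] at hω; exact hω
        rw [Set.indicator_of_mem hBω, Set.indicator_of_mem hω]
        show Real.exp (l * ∑ i : ↥S, Y ((i : {i : ℕ // 1 ≤ i}) : ℕ) ω) = _
        rw [idS]
      · have hBω : (fun (i : ↥S) => Y ((i : {i : ℕ // 1 ≤ i}) : ℕ) ω) ∉ B := by
          rw [hAvB] at hω; exact hω
        rw [Set.indicator_of_notMem hBω, Set.indicator_of_notMem hω]
    have hψG : ∀ ω, Real.exp (l * ∑ i : ↥T, Y ((i : {i : ℕ // 1 ≤ i}) : ℕ) ω)
        = Real.exp (l * ∑ n ∈ Finset.Ioc v k, Y n ω) := by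
      intro ω
      rw [idT]
    have hRkdec : ∀ ω, R k ω = R v ω + ∑ n ∈ Finset.Ioc v k, Y n ω := by
      intro ω
      exact (Finset.sum_Ioc_consecutive _ (Nat.zero_le v) hvk).symm
    have hintRv : Integrable (fun ω => Real.exp (l * R v ω)) μ :=
      hexp_int (Finset.Ioc 0 v) (Finset.Ioc_subset_Ioc le_rfl hvk)
    have hintD : Integrable (fun ω => Real.exp (l * ∑ n ∈ Finset.Ioc v k, Y n ω)) μ :=
      hexp_int (Finset.Ioc v k) (Finset.Ioc_subset_Ioc (Nat.zero_le v) le_rfl)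
    have hintRk : Integrable (fun ω => Real.exp (l * R k ω)) μ :=
      hexp_int (Finset.Ioc 0 k) (subset_refl _)
    have hint1 : Integrable (fun ω => B.indicator
        (fun y : ↥S → ℝ => Real.exp (l * ∑ i : ↥S, y i))
        (fun i : ↥S => Y ((i : {i : ℕ // 1 ≤ i}) : ℕ) ω)) μ := by
      rw [show (fun ω => B.indicator (fun y : ↥S → ℝ => Real.exp (l * ∑ i : ↥S, y i))
          (fun i : ↥S => Y ((i : {i : ℕ // 1 ≤ i}) : ℕ) ω))
        = Set.indicator (A v) (fun ω => Real.exp (l * R v ω)) from funext hφF]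
      exact hintRv.indicator (hAmeas v)
    have hint2 : Integrable
        (fun ω => Real.exp (l * ∑ i : ↥T, Y ((i : {i : ℕ // 1 ≤ i}) : ℕ) ω)) μ := by
      rw [show (fun ω => Real.exp (l * ∑ i : ↥T, Y ((i : {i : ℕ // 1 ≤ i}) : ℕ) ω))
        = (fun ω => Real.exp (l * ∑ n ∈ Finset.Ioc v k, Y n ω)) from funext hψG]
      exact hintD
    have hDint : Integrable (fun ω => ∑ n ∈ Finset.Ioc v k, Y n ω) μ :=
      integrable_finset_sum _ fun i hi => hYint i (hmemT i hi)
    have hDmean : ∫ ω, (∑ n ∈ Finset.Ioc v k, Y n ω) ∂μ = 0 := by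
      rw [integral_finset_sum _ fun i hi => hYint i (hmemT i hi)]
      exact Finset.sum_eq_zero fun i hi => hmean i (hmemT i hi)
    have hJensen : 1 ≤ ∫ ω, Real.exp (l * ∑ n ∈ Finset.Ioc v k, Y n ω) ∂μ := by
      have h1 : (1:ℝ) = ∫ ω, (1 + l * ∑ n ∈ Finset.Ioc v k, Y n ω) ∂μ := by
        rw [integral_add (integrable_const 1) (hDint.const_mul l),
          MeasureTheory.integral_const_mul, hDmean, integral_const]
        simp
      rw [h1]
      refine integral_mono ((integrable_const 1).add (hDint.const_mul l)) hintD fun ω => ?_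
      have := Real.add_one_le_exp (l * ∑ n ∈ Finset.Ioc v k, Y n ω)
      simp only []
      linarith
    have hnn : 0 ≤ ∫ ω, Set.indicator (A v) (fun ω => Real.exp (l * R v ω)) ω ∂μ :=
      integral_nonneg fun ω => Set.indicator_nonneg (fun _ _ => (Real.exp_pos _).le) ω
    calc (μ (A v)).toReal * Real.exp (l*t)
        = ∫ ω, Set.indicator (A v) (fun _ => Real.exp (l*t)) ω ∂μ := by
          rw [integral_indicator_const _ (hAmeas v)]
          simp [mul_comm, Measure.real]
      _ ≤ ∫ ω, Set.indicator (A v) (fun ω => Real.exp (l * R v ω)) ω ∂μ := by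
          refine integral_mono_of_nonneg ?_ (hintRv.indicator (hAmeas v)) ?_
          · filter_upwards with ω using Set.indicator_nonneg (fun _ _ => (Real.exp_pos _).le) ω
          · filter_upwards with ω
            by_cases hω : ω ∈ A v
            · rw [Set.indicator_of_mem hω, Set.indicator_of_mem hω]
              exact Real.exp_le_exp.2 (mul_le_mul_of_nonneg_left hω.1 hl)
            · rw [Set.indicator_of_notMem hω, Set.indicator_of_notMem hω]
      _ ≤ (∫ ω, Set.indicator (A v) (fun ω => Real.exp (l * R v ω)) ω ∂μ)
            * ∫ ω, Real.exp (l * ∑ n ∈ Finset.Ioc v k, Y n ω) ∂μ :=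
          le_mul_of_one_le_right hnn hJensen
      _ = (∫ ω, B.indicator (fun y : ↥S → ℝ => Real.exp (l * ∑ i : ↥S, y i))
              (fun i : ↥S => Y ((i : {i : ℕ // 1 ≤ i}) : ℕ) ω) ∂μ)
          * ∫ ω, Real.exp (l * ∑ i : ↥T, Y ((i : {i : ℕ // 1 ≤ i}) : ℕ) ω) ∂μ := by
          rw [show (fun ω => B.indicator (fun y : ↥S → ℝ => Real.exp (l * ∑ i : ↥S, y i))
              (fun i : ↥S => Y ((i : {i : ℕ // 1 ≤ i}) : ℕ) ω))
            = Set.indicator (A v) (fun ω => Real.exp (l * R v ω)) from funext hφF]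
          rw [show (fun ω => Real.exp (l * ∑ i : ↥T, Y ((i : {i : ℕ // 1 ≤ i}) : ℕ) ω))
            = (fun ω => Real.exp (l * ∑ n ∈ Finset.Ioc v k, Y n ω)) from funext hψG]
      _ = ∫ ω, (B.indicator (fun y : ↥S → ℝ => Real.exp (l * ∑ i : ↥S, y i))
              (fun i : ↥S => Y ((i : {i : ℕ // 1 ≤ i}) : ℕ) ω)
            * Real.exp (l * ∑ i : ↥T, Y ((i : {i : ℕ // 1 ≤ i}) : ℕ) ω)) ∂μ :=
          (hIndφψ.integral_mul_eq_mul_integral hint1.aestronglyMeasurable hint2.aestronglyMeasurable).symm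
      _ = ∫ ω, Set.indicator (A v) (fun ω => Real.exp (l * R k ω)) ω ∂μ := by
          refine integral_congr_ae (Filter.Eventually.of_forall fun ω => ?_)
          beta_reduce
          rw [hφF ω, hψG ω]
          by_cases hω : ω ∈ A v
          · rw [Set.indicator_of_mem hω, Set.indicator_of_mem hω, ← Real.exp_add]
            congr 1
            rw [hRkdec ω]; ring
          · rw [Set.indicator_of_notMem hω, Set.indicator_of_notMem hω, zero_mul]
  -- assemble
  have hintRk : Integrable (fun ω => Real.exp (l * R k ω)) μ :=
    hexp_int (Finset.Ioc 0 k) (subset_refl _)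
  have hU : (μ {ω | ∃ v, 1 ≤ v ∧ v ≤ k ∧ t ≤ R v ω}).toReal
      = ∑ v ∈ Finset.Icc 1 k, (μ (A v)).toReal := by
    rw [hcover, measure_biUnion_finset hdisj (fun v _ => hAmeas v)]
    exact ENNReal.toReal_sum fun v _ => measure_ne_top μ _
  have hfinal : (μ {ω | ∃ v, 1 ≤ v ∧ v ≤ k ∧ t ≤ R v ω}).toReal * Real.exp (l*t)
      ≤ Real.exp ((k:ℝ) * (l^2 * b^2)) := by
    rw [hU, Finset.sum_mul]
    calc ∑ v ∈ Finset.Icc 1 k, (μ (A v)).toReal * Real.exp (l*t)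
        ≤ ∑ v ∈ Finset.Icc 1 k,
            ∫ ω, Set.indicator (A v) (fun ω => Real.exp (l * R k ω)) ω ∂μ := by
          refine Finset.sum_le_sum fun v hv => ?_
          have := Finset.mem_Icc.1 hv
          exact key v this.1 this.2
      _ = ∑ v ∈ Finset.Icc 1 k, ∫ ω in A v, Real.exp (l * R k ω) ∂μ := by
          refine Finset.sum_congr rfl fun v _ => ?_
          rw [integral_indicator (hAmeas v)]
      _ = ∫ ω in ⋃ v ∈ Finset.Icc 1 k, A v, Real.exp (l * R k ω) ∂μ :=
          (integral_biUnion_finset _ (fun v _ => hAmeas v) hdisj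
            (fun v _ => hintRk.integrableOn)).symm
      _ ≤ ∫ ω, Real.exp (l * R k ω) ∂μ := by
          refine setIntegral_le_integral hintRk ?_
          filter_upwards with ω using (Real.exp_pos _).le
      _ ≤ Real.exp ((k:ℝ) * (l^2 * b^2)) := by
          have := aux_mgf_sum μ Y hmeas hind b hbd hmean (Finset.Ioc 0 k)
            (fun i hi => (Finset.mem_Ioc.1 hi).1) l
          simpa [Nat.card_Ioc] using this
  have hexp := Real.exp_pos (l*t)
  rw [← le_div_iff₀ hexp] at hfinal
  calc (μ {ω | ∃ v, 1 ≤ v ∧ v ≤ k ∧ t ≤ R v ω}).toReal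
      ≤ Real.exp ((k:ℝ) * (l^2 * b^2)) / Real.exp (l*t) := hfinal
    _ = Real.exp (-l*t + l^2 * (k:ℝ) * b^2) := by
        rw [← Real.exp_sub]
        congr 1
        ring

open Real in
lemma geom_half_sum (N : ℕ) : ∑ n ∈ Finset.range N, Real.exp (-(n:ℝ)/2) ≤ 3 := by
  have hr1 : Real.exp (-1/2 : ℝ) < 1 := by
    rw [Real.exp_lt_one_iff]; norm_num
  have hr0 : 0 ≤ Real.exp (-1/2 : ℝ) := (Real.exp_pos _).le
  have hrw : ∀ n : ℕ, Real.exp (-(n:ℝ)/2) = Real.exp (-1/2 : ℝ) ^ n := by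
    intro n
    rw [← Real.exp_nat_mul]
    congr 1; ring
  have hsum : ∑ n ∈ Finset.range N, Real.exp (-(n:ℝ)/2)
      = ∑ n ∈ Finset.range N, Real.exp (-1/2 : ℝ) ^ n :=
    Finset.sum_congr rfl fun n _ => hrw n
  rw [hsum]
  have hgeom := geom_sum_eq (ne_of_lt hr1) N
  rw [hgeom]
  have h23 : Real.exp (-1/2 : ℝ) ≤ 2/3 := by
    rw [show (-1/2 : ℝ) = -(1/2) by norm_num, Real.exp_neg]
    rw [show (1/2 : ℝ) = 1/2 by norm_num]
    have he : (3/2 : ℝ) ≤ Real.exp (1/2 : ℝ) := by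
      rw [show (1/2 : ℝ) = 1/2 by rfl, Real.exp_half]
      rw [show (3/2:ℝ) = Real.sqrt ((3/2)^2) from (Real.sqrt_sq (by norm_num)).symm]
      apply Real.sqrt_le_sqrt
      nlinarith [Real.exp_one_gt_d9]
    rw [inv_le_comm₀ (lt_of_lt_of_le (by norm_num) he) (by norm_num)]
    linarith
  have hpow : (0:ℝ) ≤ Real.exp (-1/2:ℝ) ^ N := pow_nonneg hr0 N
  have h1r : (1:ℝ) - Real.exp (-1/2:ℝ) ≥ 1/3 := by linarith
  have : (Real.exp (-1/2:ℝ) ^ N - 1) / (Real.exp (-1/2:ℝ) - 1)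
      = (1 - Real.exp (-1/2:ℝ) ^ N) / (1 - Real.exp (-1/2:ℝ)) := by
    rw [div_eq_div_iff (by linarith) (by linarith)]
    ring
  rw [this]
  rw [div_le_iff₀ (by linarith)]
  nlinarith

lemma aux_moment {Ω : Type} [MeasurableSpace Ω] (μ : Measure Ω) [IsProbabilityMeasure μ]
    (M : Ω → ℝ) (hM : Measurable M) (hM0 : ∀ ω, 0 ≤ M ω) (B : ℝ)
    (hMB : ∀ᵐ ω ∂μ, M ω ≤ B) (τ : ℝ) (hτ : 0 < τ) (p : ℝ) (hp : 2 ≤ p)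
    (htail : ∀ n : ℕ, (μ {ω | (n:ℝ) * τ ≤ M ω}).toReal ≤ 2 * Real.exp (-(n:ℝ)^2)) :
    ∫ ω, M ω ^ p ∂μ ≤ 6 * 4^p * p^(p/2) * τ^p := by
  have hp0 : (0:ℝ) < p := by linarith
  set N : ℕ := ⌊B/τ⌋₊ + 1 with hN
  set E : ℕ → Set Ω := fun n => {ω | (n:ℝ)*τ ≤ M ω ∧ M ω < ((n:ℝ)+1)*τ} with hE
  have hEmeas : ∀ n, MeasurableSet (E n) := fun n =>
    (measurableSet_le measurable_const hM).inter (measurableSet_lt hM measurable_const)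
  have hae : ∀ᵐ ω ∂μ, M ω ^ p ≤ ∑ n ∈ Finset.range N,
      Set.indicator (E n) (fun _ => (((n:ℝ)+1)*τ)^p) ω := by
    filter_upwards [hMB] with ω hB
    set n := ⌊M ω / τ⌋₊ with hn
    have hdiv0 : 0 ≤ M ω / τ := div_nonneg (hM0 ω) hτ.le
    have hn1 : (n:ℝ)*τ ≤ M ω := by
      have := Nat.floor_le hdiv0
      rw [← hn] at this
      calc (n:ℝ)*τ ≤ (M ω / τ) * τ := mul_le_mul_of_nonneg_right this hτ.le
        _ = M ω := by field_simp
    have hn2 : M ω < ((n:ℝ)+1)*τ := by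
      have := Nat.lt_floor_add_one (M ω / τ)
      rw [← hn] at this
      calc M ω = (M ω / τ) * τ := by field_simp
        _ < ((n:ℝ)+1)*τ := mul_lt_mul_of_pos_right this hτ
    have hnN : n < N := by
      rw [hN]
      have hdd : M ω / τ ≤ B / τ := by gcongr
      have : n ≤ ⌊B/τ⌋₊ := Nat.floor_le_floor hdd
      omega
    have hωE : ω ∈ E n := ⟨hn1, hn2⟩
    calc M ω ^ p ≤ (((n:ℝ)+1)*τ)^p := Real.rpow_le_rpow (hM0 ω) hn2.le hp0.le
      _ = Set.indicator (E n) (fun _ => (((n:ℝ)+1)*τ)^p) ω :=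
          (Set.indicator_of_mem hωE (fun _ => (((n:ℝ)+1)*τ)^p)).symm
      _ ≤ ∑ m ∈ Finset.range N, Set.indicator (E m) (fun _ => (((m:ℝ)+1)*τ)^p) ω := by
          refine Finset.single_le_sum
            (f := fun m => Set.indicator (E m) (fun _ => (((m:ℝ)+1)*τ)^p) ω)
            (fun m _ => ?_) (Finset.mem_range.2 hnN)
          exact Set.indicator_nonneg (fun _ _ =>
            Real.rpow_nonneg (by positivity) p) ω
  have hint : Integrable (fun ω => ∑ n ∈ Finset.range N,
      Set.indicator (E n) (fun _ => (((n:ℝ)+1)*τ)^p) ω) μ := by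
    apply integrable_finset_sum
    intro n _
    exact (integrable_const _).indicator (hEmeas n)
  have step1 : ∫ ω, M ω ^ p ∂μ ≤ ∑ n ∈ Finset.range N,
      (((n:ℝ)+1)*τ)^p * (μ (E n)).toReal := by
    calc ∫ ω, M ω ^ p ∂μ
        ≤ ∫ ω, (∑ n ∈ Finset.range N,
            Set.indicator (E n) (fun _ => (((n:ℝ)+1)*τ)^p) ω) ∂μ := by
          refine integral_mono_of_nonneg ?_ hint hae
          filter_upwards with ω using Real.rpow_nonneg (hM0 ω) p
      _ = ∑ n ∈ Finset.range N, ∫ ω, Set.indicator (E n) (fun _ => (((n:ℝ)+1)*τ)^p) ω ∂μ :=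
          integral_finset_sum _ fun n _ => (integrable_const _).indicator (hEmeas n)
      _ = ∑ n ∈ Finset.range N, (((n:ℝ)+1)*τ)^p * (μ (E n)).toReal := by
          refine Finset.sum_congr rfl fun n _ => ?_
          rw [integral_indicator_const _ (hEmeas n)]
          simp [mul_comm, Measure.real]
  have step2 : ∀ n : ℕ, (((n:ℝ)+1)*τ)^p * (μ (E n)).toReal
      ≤ (2 * τ^p * (4*Real.sqrt p)^p) * Real.exp (-(n:ℝ)/2) := by
    intro n
    have hμE : (μ (E n)).toReal ≤ 2 * Real.exp (-(n:ℝ)^2) := by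
      refine le_trans ?_ (htail n)
      refine ENNReal.toReal_mono (measure_ne_top μ _) (measure_mono ?_)
      intro ω hω
      exact hω.1
    have hEnonneg : (0:ℝ) ≤ (((n:ℝ)+1)*τ)^p := Real.rpow_nonneg (by positivity) p
    have hμE0 : (0:ℝ) ≤ (μ (E n)).toReal := ENNReal.toReal_nonneg
    set x := (n:ℝ) with hx
    have hx0 : 0 ≤ x := Nat.cast_nonneg n
    have hsqrtp : 1 ≤ Real.sqrt p := by
      rw [show (1:ℝ) = Real.sqrt 1 from (Real.sqrt_one).symm]
      exact Real.sqrt_le_sqrt (by linarith)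
    have hxx : x ≤ x^2 := by
      rcases Nat.eq_zero_or_pos n with h | h
      · simp [hx, h]
      · have h1 : (1:ℝ) ≤ x := by
          have h2 : (1:ℕ) ≤ n := h
          rw [hx]
          exact_mod_cast h2
        nlinarith
    -- claim: (x+1) * exp (-x^2/(2*p)) ≤ 4 * sqrt p
    have key : (x+1) * Real.exp (-x^2/(2*p)) ≤ 4 * Real.sqrt p := by
      rcases le_or_gt (x+1) (2*Real.sqrt p) with h | h
      · have hexp1 : Real.exp (-x^2/(2*p)) ≤ 1 := by
          rw [Real.exp_le_one_iff, neg_div]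
          have : 0 ≤ x^2/(2*p) := by positivity
          linarith
        calc (x+1) * Real.exp (-x^2/(2*p)) ≤ (x+1) * 1 :=
              mul_le_mul_of_nonneg_left hexp1 (by linarith)
          _ ≤ 2*Real.sqrt p := by linarith
          _ ≤ 4*Real.sqrt p := by linarith
      · have hx1 : 1 ≤ x := by nlinarith
        have hxsq : Real.sqrt p < x := by nlinarith
        have hu : 0 < x^2/(2*p) := by positivity
        have hexp2 : Real.exp (-x^2/(2*p)) ≤ (2*p)/x^2 := by
          rw [show -x^2/(2*p) = -(x^2/(2*p)) by ring, Real.exp_neg]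
          rw [inv_le_comm₀ (Real.exp_pos _) (by positivity), inv_div]
          refine le_trans ?_ (Real.add_one_le_exp _)
          linarith
        calc (x+1) * Real.exp (-x^2/(2*p)) ≤ (x+1) * ((2*p)/x^2) :=
              mul_le_mul_of_nonneg_left hexp2 (by linarith)
          _ ≤ (2*x) * ((2*p)/x^2) := by
              refine mul_le_mul_of_nonneg_right (by linarith) (by positivity)
          _ = 4*p/x := by field_simp; ring
          _ ≤ 4*p/Real.sqrt p := by
              refine div_le_div_of_nonneg_left (by linarith) (by linarith) hxsq.le
          _ = 4*Real.sqrt p := by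
              rw [mul_div_assoc, Real.div_sqrt]
    have hclaim : (x+1)^p * Real.exp (-(x^2)) ≤ (4*Real.sqrt p)^p * Real.exp (-x/2) := by
      have hsplit : Real.exp (-(x^2)) = Real.exp (-x^2/(2*p))^p * Real.exp (-x^2/2) := by
        rw [← Real.exp_mul, ← Real.exp_add]
        congr 1
        field_simp
        ring
      calc (x+1)^p * Real.exp (-(x^2))
          = (x+1)^p * (Real.exp (-x^2/(2*p))^p * Real.exp (-x^2/2)) := by rw [hsplit]
        _ = ((x+1) * Real.exp (-x^2/(2*p)))^p * Real.exp (-x^2/2) := by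
            rw [Real.mul_rpow (by linarith) (Real.exp_pos _).le]
            ring
        _ ≤ (4*Real.sqrt p)^p * Real.exp (-x/2) := by
            refine mul_le_mul ?_ ?_ (Real.exp_pos _).le (Real.rpow_nonneg (by positivity) p)
            · exact Real.rpow_le_rpow (by positivity) key hp0.le
            · rw [Real.exp_le_exp, neg_div, neg_div]
              linarith
    calc (((n:ℝ)+1)*τ)^p * (μ (E n)).toReal
        ≤ ((x+1)*τ)^p * (2*Real.exp (-(x^2))) := mul_le_mul_of_nonneg_left hμE hEnonneg
      _ = 2*τ^p * ((x+1)^p * Real.exp (-(x^2))) := by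
          rw [Real.mul_rpow (by positivity) hτ.le]
          ring
      _ ≤ 2*τ^p * ((4*Real.sqrt p)^p * Real.exp (-x/2)) := by
          refine mul_le_mul_of_nonneg_left hclaim (by positivity)
      _ = (2 * τ^p * (4*Real.sqrt p)^p) * Real.exp (-x/2) := by ring
  calc ∫ ω, M ω ^ p ∂μ
      ≤ ∑ n ∈ Finset.range N, (((n:ℝ)+1)*τ)^p * (μ (E n)).toReal := step1
    _ ≤ ∑ n ∈ Finset.range N, (2 * τ^p * (4*Real.sqrt p)^p) * Real.exp (-(n:ℝ)/2) :=
        Finset.sum_le_sum fun n _ => step2 n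
    _ = (2 * τ^p * (4*Real.sqrt p)^p) * ∑ n ∈ Finset.range N, Real.exp (-(n:ℝ)/2) := by
        rw [← Finset.mul_sum]
    _ ≤ (2 * τ^p * (4*Real.sqrt p)^p) * 3 := by
        refine mul_le_mul_of_nonneg_left (geom_half_sum N) ?_
        have h1 : (0:ℝ) ≤ τ^p := Real.rpow_nonneg hτ.le p
        have h2 : (0:ℝ) ≤ (4*Real.sqrt p)^p := Real.rpow_nonneg (by positivity) p
        positivity
    _ = 6 * 4^p * p^(p/2) * τ^p := by
        rw [Real.mul_rpow (by norm_num) (Real.sqrt_nonneg p),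
          show Real.sqrt p = p ^ (1/2:ℝ) from Real.sqrt_eq_rpow p,
          ← Real.rpow_mul hp0.le,
          show (1/2:ℝ)*p = p/2 by ring]
        ring

open Real in
lemma aux_lemA {Ω : Type} [MeasurableSpace Ω] (μ : Measure Ω) [IsProbabilityMeasure μ]
    (Y : ℕ → Ω → ℝ) (hmeas : ∀ i, Measurable (Y i))
    (hind : iIndepFun 
      (fun i : {i : ℕ // 1 ≤ i} => Y i.val) μ)
    (b : ℝ) (hb : 0 < b) (hbd : ∀ i, 1 ≤ i → ∀ᵐ ω ∂μ, |Y i ω| ≤ b)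
    (hmean : ∀ i, 1 ≤ i → ∫ ω, Y i ω ∂μ = 0)
    (k : ℕ) (hk : 1 ≤ k) (p : ℝ) (hp : 2 ≤ p) :
    ∫ ω, ((Finset.range (k+1)).sup' (Finset.nonempty_range_iff.2 (Nat.succ_ne_zero k))
        (fun w => |∑ i ∈ Finset.Ioc 0 w, Y i ω|)) ^ p ∂μ
      ≤ 6 * 4^p * p^(p/2) * (2 * Real.sqrt k * b)^p := by
  classical
  have hne : (Finset.range (k+1)).Nonempty := Finset.nonempty_range_iff.2 (Nat.succ_ne_zero k)
  set M : Ω → ℝ := fun ω => (Finset.range (k+1)).sup'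
    hne (fun w => |∑ i ∈ Finset.Ioc 0 w, Y i ω|) with hM
  have hk0 : (0:ℝ) < (k:ℝ) := by exact_mod_cast hk
  have hsqrtk : 0 < Real.sqrt k := Real.sqrt_pos.2 hk0
  set τ : ℝ := 2 * Real.sqrt k * b with hτdef
  have hτ : 0 < τ := by positivity
  have hMmeas : Measurable M := by
    have h1 : Measurable ((Finset.range (k+1)).sup' hne
        (fun w ω => |∑ i ∈ Finset.Ioc 0 w, Y i ω|)) :=
      Finset.measurable_sup' hne fun w _ =>
        (Finset.measurable_sum _ fun i _ => hmeas i).abs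
    have h2 : M = (Finset.range (k+1)).sup' hne
        (fun w ω => |∑ i ∈ Finset.Ioc 0 w, Y i ω|) := by
      funext ω
      rw [hM, Finset.sup'_apply]
    rw [h2]
    exact h1
  have hM0 : ∀ ω, 0 ≤ M ω := by
    intro ω
    have h0 : |∑ i ∈ Finset.Ioc 0 0, Y i ω| ≤ M ω :=
      Finset.le_sup' (fun w => |∑ i ∈ Finset.Ioc 0 w, Y i ω|)
        (Finset.mem_range.2 (Nat.succ_pos k))
    simpa using h0
  have hb_all : ∀ᵐ ω ∂μ, ∀ i ∈ (↑(Finset.Ioc 0 k) : Set ℕ), |Y i ω| ≤ b := by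
    rw [ae_ball_iff (Finset.Ioc 0 k : Finset ℕ).countable_toSet]
    intro i hi
    exact hbd i (Finset.mem_Ioc.1 hi).1
  have hMB : ∀ᵐ ω ∂μ, M ω ≤ (k:ℝ)*b := by
    filter_upwards [hb_all] with ω hω
    rw [hM]
    rw [Finset.sup'_le_iff]
    intro w hw
    have hwk : w ≤ k := by
      have := Finset.mem_range.1 hw; omega
    calc |∑ i ∈ Finset.Ioc 0 w, Y i ω| ≤ ∑ i ∈ Finset.Ioc 0 w, |Y i ω| :=
          Finset.abs_sum_le_sum_abs _ _
      _ ≤ ∑ _i ∈ Finset.Ioc 0 w, b := Finset.sum_le_sum fun i hi =>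
          hω i (Finset.Ioc_subset_Ioc le_rfl hwk hi)
      _ = (Finset.Ioc 0 w).card * b := by rw [Finset.sum_const, nsmul_eq_mul]
      _ ≤ (k:ℝ) * b := by
          refine mul_le_mul_of_nonneg_right ?_ hb.le
          simp [Nat.card_Ioc]
          exact_mod_cast hwk
  -- tail bound
  have htail : ∀ n : ℕ, (μ {ω | (n:ℝ) * τ ≤ M ω}).toReal ≤ 2 * Real.exp (-(n:ℝ)^2) := by
    intro n
    rcases Nat.eq_zero_or_pos n with hn | hn
    · subst hn
      simp only [Nat.cast_zero, neg_zero]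
      calc (μ {ω | (0:ℝ) * τ ≤ M ω}).toReal ≤ (μ Set.univ).toReal :=
            ENNReal.toReal_mono (measure_ne_top μ _) (measure_mono (Set.subset_univ _))
        _ = 1 := by simp
        _ ≤ 2 * Real.exp (-(0:ℝ)^2) := by norm_num
    · set t : ℝ := (n:ℝ) * τ with htdef
      have hn1 : (1:ℝ) ≤ (n:ℝ) := by exact_mod_cast hn
      have ht : 0 < t := by positivity
      set l : ℝ := t / (2*(k:ℝ)*b^2) with hldef
      have hl : 0 ≤ l := by positivity
      -- the exponent value
      have hexpval : -l*t + l^2 * (k:ℝ) * b^2 = -(n:ℝ)^2 := by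
        have hsq : Real.sqrt (k:ℝ) ^ 2 = (k:ℝ) := Real.sq_sqrt hk0.le
        have ht2 : t^2 = (n:ℝ)^2 * (4*(k:ℝ)*b^2) := by
          have h1 : t^2 = (n:ℝ)^2 * (4 * Real.sqrt (k:ℝ)^2 * b^2) := by
            rw [htdef, hτdef]; ring
          rw [hsq] at h1
          exact h1
        have e1 : -l*t + l^2 * (k:ℝ) * b^2 = -(t^2)/(4*(k:ℝ)*b^2) := by
          rw [hldef]
          field_simp
          ring
        rw [e1, ht2]
        field_simp
      -- inclusion into one-sided events
      have hsub : {ω | t ≤ M ω} ⊆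
          {ω | ∃ v, 1 ≤ v ∧ v ≤ k ∧ t ≤ ∑ i ∈ Finset.Ioc 0 v, Y i ω} ∪
          {ω | ∃ v, 1 ≤ v ∧ v ≤ k ∧ t ≤ ∑ i ∈ Finset.Ioc 0 v, (fun j ω' => -Y j ω') i ω} := by
        intro ω hω
        rw [Set.mem_setOf_eq, hM] at hω
        rw [Finset.le_sup'_iff] at hω
        obtain ⟨w, hw, habs⟩ := hω
        have hwk : w ≤ k := by have := Finset.mem_range.1 hw; omega
        have hw1 : 1 ≤ w := by
          by_contra hcon
          push_neg at hcon
          interval_cases w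
          simp at habs
          linarith
        rcases le_abs.1 habs with h | h
        · exact Or.inl ⟨w, hw1, hwk, h⟩
        · refine Or.inr ⟨w, hw1, hwk, ?_⟩
          rw [← Finset.sum_neg_distrib] at h
          exact h
      have hone := aux_maximal μ Y hmeas hind b hb hbd hmean k hk t l ht hl
      have htwo := aux_maximal μ (fun j ω' => -Y j ω')
        (fun i => (hmeas i).neg)
        (by
          have := hind.comp (fun _ : {i : ℕ // 1 ≤ i} => (fun x : ℝ => -x))
            (fun _ => measurable_neg)
          exact this)
        b hb
        (fun i hi => by filter_upwards [hbd i hi] with ω h using by simpa using h)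
        (fun i hi => by simp [integral_neg, hmean i hi])
        k hk t l ht hl
      calc (μ {ω | (n:ℝ) * τ ≤ M ω}).toReal
          ≤ ((μ {ω | ∃ v, 1 ≤ v ∧ v ≤ k ∧ t ≤ ∑ i ∈ Finset.Ioc 0 v, Y i ω}) +
             (μ {ω | ∃ v, 1 ≤ v ∧ v ≤ k ∧
                t ≤ ∑ i ∈ Finset.Ioc 0 v, (fun j ω' => -Y j ω') i ω})).toReal := by
            refine ENNReal.toReal_mono ?_ ?_
            · exact ENNReal.add_ne_top.2 ⟨measure_ne_top μ _, measure_ne_top μ _⟩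
            · exact le_trans (measure_mono hsub) (measure_union_le _ _)
        _ = (μ {ω | ∃ v, 1 ≤ v ∧ v ≤ k ∧ t ≤ ∑ i ∈ Finset.Ioc 0 v, Y i ω}).toReal +
            (μ {ω | ∃ v, 1 ≤ v ∧ v ≤ k ∧
               t ≤ ∑ i ∈ Finset.Ioc 0 v, (fun j ω' => -Y j ω') i ω}).toReal :=
            ENNReal.toReal_add (measure_ne_top μ _) (measure_ne_top μ _)
        _ ≤ Real.exp (-l*t + l^2 * (k:ℝ) * b^2) + Real.exp (-l*t + l^2 * (k:ℝ) * b^2) :=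
            add_le_add hone htwo
        _ = 2 * Real.exp (-(n:ℝ)^2) := by rw [hexpval]; ring
  have := aux_moment μ M hMmeas hM0 ((k:ℝ)*b) hMB τ hτ p hp htail
  exact this

open Real in
theorem max_interval_sum_moment_bound :
    ∃ C : ℝ, 0 < C ∧ ∀ (j m : ℕ), 0 < m → ∀ c : Fin m → ℂ,
      (∀ u : Fin m, (2:ℝ) ^ (-(j:ℝ) - 1) < ‖c u‖ ^ 2 ∧ ‖c u‖ ^ 2 ≤ (2:ℝ) ^ (-(j:ℝ))) →
      ∀ (Ω : Type) (_ : MeasurableSpace Ω) (μ : Measure Ω),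
        IsProbabilityMeasure μ →
      ∀ X : ℕ → Ω → ℂ, (∀ i, Measurable (X i)) →
        iIndepFun 
          (fun i : {i : ℕ // 1 ≤ i} => X i.val) μ →
        (∀ i : ℕ, 1 ≤ i → ∀ s : Set ℂ, MeasurableSet s →
          μ {ω | X i ω ∈ s} = (Nat.card {u : Fin m // c u ∈ s} : ENNReal) / (m : ENNReal)) →
        ∀ k : ℕ, 1 ≤ k → ∀ p : ℝ, 2 < p →
          (∫ ω, sSup { r : ℝ | ∃ u v : ℕ, u ≤ v ∧ v ≤ k ∧
              r = ‖∑ i ∈ Finset.Ioc u v, (X i ω - ∫ ω', X i ω' ∂μ)‖ ^ p } ∂μ)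
            ≤ C ^ p * (k : ℝ) ^ (p / 2) * p ^ (p / 2) * (2:ℝ) ^ (-(j:ℝ) * p / 2) := by
  refine ⟨256, by norm_num, ?_⟩
  intro j m hm c hc Ω mΩ μ hμ X hXmeas hXind hdist k hk p hp
  have hp0 : (0:ℝ) < p := by linarith
  set σ : ℝ := (2:ℝ) ^ (-(j:ℝ)/2) with hσ
  have hσpos : 0 < σ := Real.rpow_pos_of_pos (by norm_num) _
  have hσsq : σ^2 = (2:ℝ)^(-(j:ℝ)) := by
    rw [hσ, ← Real.rpow_natCast ((2:ℝ)^(-(j:ℝ)/2)) 2, ← Real.rpow_mul (by norm_num : (0:ℝ) ≤ 2)]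
    norm_num
  -- a.e. the X i take values in the range of c
  have hXbd : ∀ i, 1 ≤ i → ∀ᵐ ω ∂μ, ‖X i ω‖ ≤ σ := by
    intro i hi
    have hs : MeasurableSet ((Set.range c)ᶜ) := (Set.finite_range c).measurableSet.compl
    have h0 := hdist i hi _ hs
    have hempty : IsEmpty {u : Fin m // c u ∈ (Set.range c)ᶜ} :=
      ⟨fun u => u.2 ⟨u.1, rfl⟩⟩
    have hcard : Nat.card {u : Fin m // c u ∈ (Set.range c)ᶜ} = 0 := Nat.card_of_isEmpty
    rw [hcard] at h0
    simp only [Nat.cast_zero, ENNReal.zero_div] at h0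
    have hae : ∀ᵐ ω ∂μ, X i ω ∈ Set.range c := by
      rw [ae_iff]
      convert h0 using 2
      rfl
    filter_upwards [hae] with ω hω
    obtain ⟨u, hu⟩ := hω
    rw [← hu]
    have h2 := (hc u).2
    calc ‖c u‖ = Real.sqrt (‖c u‖^2) := (Real.sqrt_sq (norm_nonneg _)).symm
      _ ≤ Real.sqrt (σ^2) := Real.sqrt_le_sqrt (by rw [hσsq]; exact h2)
      _ = σ := Real.sqrt_sq hσpos.le
  have hXint : ∀ i, 1 ≤ i → Integrable (X i) μ := by
    intro i hi
    exact Integrable.mono' (integrable_const σ) (hXmeas i).aestronglyMeasurable (hXbd i hi)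
  have hEbd : ∀ i, 1 ≤ i → ‖∫ ω', X i ω' ∂μ‖ ≤ σ := by
    intro i hi
    calc ‖∫ ω', X i ω' ∂μ‖ ≤ ∫ _ω', σ ∂μ :=
          norm_integral_le_of_norm_le (integrable_const σ) (hXbd i hi)
      _ = σ := by simp
  set b : ℝ := 2*σ with hb
  have hbpos : 0 < b := by positivity
  set Yre : ℕ → Ω → ℝ := fun i ω => (X i ω - ∫ ω', X i ω' ∂μ).re with hYre
  set Yim : ℕ → Ω → ℝ := fun i ω => (X i ω - ∫ ω', X i ω' ∂μ).im with hYim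
  have hYre_meas : ∀ i, Measurable (Yre i) := fun i =>
    Complex.measurable_re.comp ((hXmeas i).sub measurable_const)
  have hYim_meas : ∀ i, Measurable (Yim i) := fun i =>
    Complex.measurable_im.comp ((hXmeas i).sub measurable_const)
  have hdiffbd : ∀ i, 1 ≤ i → ∀ᵐ ω ∂μ, ‖X i ω - ∫ ω', X i ω' ∂μ‖ ≤ b := by
    intro i hi
    filter_upwards [hXbd i hi] with ω h
    calc ‖X i ω - ∫ ω', X i ω' ∂μ‖ ≤ ‖X i ω‖ + ‖∫ ω', X i ω' ∂μ‖ := norm_sub_le _ _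
      _ ≤ σ + σ := add_le_add h (hEbd i hi)
      _ = b := by rw [hb]; ring
  have hYre_bd : ∀ i, 1 ≤ i → ∀ᵐ ω ∂μ, |Yre i ω| ≤ b := by
    intro i hi
    filter_upwards [hdiffbd i hi] with ω h
    calc |Yre i ω| ≤ ‖X i ω - ∫ ω', X i ω' ∂μ‖ := Complex.abs_re_le_norm _
      _ = ‖X i ω - ∫ ω', X i ω' ∂μ‖ := rfl
      _ ≤ b := h
  have hYim_bd : ∀ i, 1 ≤ i → ∀ᵐ ω ∂μ, |Yim i ω| ≤ b := by
    intro i hi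
    filter_upwards [hdiffbd i hi] with ω h
    calc |Yim i ω| ≤ ‖X i ω - ∫ ω', X i ω' ∂μ‖ := Complex.abs_im_le_norm _
      _ = ‖X i ω - ∫ ω', X i ω' ∂μ‖ := rfl
      _ ≤ b := h
  have hdiffint : ∀ i, 1 ≤ i → Integrable (fun ω => X i ω - ∫ ω', X i ω' ∂μ) μ := fun i hi =>
    (hXint i hi).sub (integrable_const _)
  have hdiffmean : ∀ i, 1 ≤ i → ∫ ω, (X i ω - ∫ ω', X i ω' ∂μ) ∂μ = 0 := by
    intro i hi
    rw [integral_sub (hXint i hi) (integrable_const _), integral_const]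
    simp
  have hYre_mean : ∀ i, 1 ≤ i → ∫ ω, Yre i ω ∂μ = 0 := by
    intro i hi
    have h1 := integral_re (hdiffint i hi) (𝕜 := ℂ)
    simp only [RCLike.re_to_complex] at h1
    rw [hYre]
    simp only []
    rw [h1, hdiffmean i hi]
    simp
  have hYim_mean : ∀ i, 1 ≤ i → ∫ ω, Yim i ω ∂μ = 0 := by
    intro i hi
    have h1 := integral_im (hdiffint i hi) (𝕜 := ℂ)
    simp only [RCLike.im_to_complex] at h1
    rw [hYim]
    simp only []
    rw [h1, hdiffmean i hi]
    simp
  have hYre_ind : iIndepFun 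
      (fun i : {i : ℕ // 1 ≤ i} => Yre i.val) μ := by
    have := hXind.comp (fun i : {i : ℕ // 1 ≤ i} =>
      (fun z : ℂ => (z - ∫ ω', X i.val ω' ∂μ).re))
      (fun i => Complex.measurable_re.comp (measurable_id.sub measurable_const))
    exact this
  have hYim_ind : iIndepFun 
      (fun i : {i : ℕ // 1 ≤ i} => Yim i.val) μ := by
    have := hXind.comp (fun i : {i : ℕ // 1 ≤ i} =>
      (fun z : ℂ => (z - ∫ ω', X i.val ω' ∂μ).im))
      (fun i => Complex.measurable_im.comp (measurable_id.sub measurable_const))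
    exact this
  have hne : (Finset.range (k+1)).Nonempty := Finset.nonempty_range_iff.2 (Nat.succ_ne_zero k)
  set MR : Ω → ℝ := fun ω => (Finset.range (k+1)).sup'
    (Finset.nonempty_range_iff.2 (Nat.succ_ne_zero k))
    (fun w => |∑ i ∈ Finset.Ioc 0 w, Yre i ω|) with hMR
  set MI : Ω → ℝ := fun ω => (Finset.range (k+1)).sup'
    (Finset.nonempty_range_iff.2 (Nat.succ_ne_zero k))
    (fun w => |∑ i ∈ Finset.Ioc 0 w, Yim i ω|) with hMI
  have hMR0 : ∀ ω, 0 ≤ MR ω := by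
    intro ω
    have h0 : |∑ i ∈ Finset.Ioc 0 0, Yre i ω| ≤ MR ω :=
      Finset.le_sup' (fun w => |∑ i ∈ Finset.Ioc 0 w, Yre i ω|)
        (Finset.mem_range.2 (Nat.succ_pos k))
    simpa using h0
  have hMI0 : ∀ ω, 0 ≤ MI ω := by
    intro ω
    have h0 : |∑ i ∈ Finset.Ioc 0 0, Yim i ω| ≤ MI ω :=
      Finset.le_sup' (fun w => |∑ i ∈ Finset.Ioc 0 w, Yim i ω|)
        (Finset.mem_range.2 (Nat.succ_pos k))
    simpa using h0
  -- pointwise domination of the sSup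
  have hTnorm : ∀ ω, ∀ w ≤ k, ‖∑ i ∈ Finset.Ioc 0 w, (X i ω - ∫ ω', X i ω' ∂μ)‖
      ≤ MR ω + MI ω := by
    intro ω w hw
    have hre : (∑ i ∈ Finset.Ioc 0 w, (X i ω - ∫ ω', X i ω' ∂μ)).re
        = ∑ i ∈ Finset.Ioc 0 w, Yre i ω := by
      rw [Complex.re_sum]
    have him : (∑ i ∈ Finset.Ioc 0 w, (X i ω - ∫ ω', X i ω' ∂μ)).im
        = ∑ i ∈ Finset.Ioc 0 w, Yim i ω := by
      rw [Complex.im_sum]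
    have hmem : w ∈ Finset.range (k+1) := Finset.mem_range.2 (by omega)
    calc ‖∑ i ∈ Finset.Ioc 0 w, (X i ω - ∫ ω', X i ω' ∂μ)‖
        = ‖∑ i ∈ Finset.Ioc 0 w, (X i ω - ∫ ω', X i ω' ∂μ)‖ :=
          rfl
      _ ≤ |(∑ i ∈ Finset.Ioc 0 w, (X i ω - ∫ ω', X i ω' ∂μ)).re|
          + |(∑ i ∈ Finset.Ioc 0 w, (X i ω - ∫ ω', X i ω' ∂μ)).im| :=
          Complex.norm_le_abs_re_add_abs_im _
      _ = |∑ i ∈ Finset.Ioc 0 w, Yre i ω| + |∑ i ∈ Finset.Ioc 0 w, Yim i ω| := by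
          rw [hre, him]
      _ ≤ MR ω + MI ω := add_le_add
          (Finset.le_sup' (fun w => |∑ i ∈ Finset.Ioc 0 w, Yre i ω|) hmem)
          (Finset.le_sup' (fun w => |∑ i ∈ Finset.Ioc 0 w, Yim i ω|) hmem)
  have hpt : ∀ ω, sSup { r : ℝ | ∃ u v : ℕ, u ≤ v ∧ v ≤ k ∧
      r = ‖∑ i ∈ Finset.Ioc u v, (X i ω - ∫ ω', X i ω' ∂μ)‖ ^ p }
      ≤ (2*(MR ω + MI ω))^p := by
    intro ω
    have hbase : 0 ≤ 2*(MR ω + MI ω) := by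
      have := hMR0 ω; have := hMI0 ω; linarith
    refine Real.sSup_le ?_ (Real.rpow_nonneg hbase p)
    rintro r ⟨u, v, huv, hvk, rfl⟩
    have hsplit : ∑ i ∈ Finset.Ioc u v, (X i ω - ∫ ω', X i ω' ∂μ)
        = (∑ i ∈ Finset.Ioc 0 v, (X i ω - ∫ ω', X i ω' ∂μ))
          - ∑ i ∈ Finset.Ioc 0 u, (X i ω - ∫ ω', X i ω' ∂μ) := by
      rw [eq_sub_iff_add_eq, add_comm]
      exact Finset.sum_Ioc_consecutive _ (Nat.zero_le u) huv
    have hnorm : ‖∑ i ∈ Finset.Ioc u v, (X i ω - ∫ ω', X i ω' ∂μ)‖ ≤ 2*(MR ω + MI ω) := by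
      rw [hsplit]
      calc ‖(∑ i ∈ Finset.Ioc 0 v, (X i ω - ∫ ω', X i ω' ∂μ))
            - ∑ i ∈ Finset.Ioc 0 u, (X i ω - ∫ ω', X i ω' ∂μ)‖
          ≤ ‖∑ i ∈ Finset.Ioc 0 v, (X i ω - ∫ ω', X i ω' ∂μ)‖
            + ‖∑ i ∈ Finset.Ioc 0 u, (X i ω - ∫ ω', X i ω' ∂μ)‖ := norm_sub_le _ _
        _ ≤ (MR ω + MI ω) + (MR ω + MI ω) :=
            add_le_add (hTnorm ω v hvk) (hTnorm ω u (le_trans huv hvk))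
        _ = 2*(MR ω + MI ω) := by ring
    exact Real.rpow_le_rpow (norm_nonneg _) hnorm hp0.le
  -- boundedness of MR, MI
  have hball_re : ∀ᵐ ω ∂μ, ∀ i ∈ (↑(Finset.Ioc 0 k) : Set ℕ), |Yre i ω| ≤ b := by
    rw [ae_ball_iff (Finset.Ioc 0 k : Finset ℕ).countable_toSet]
    intro i hi
    exact hYre_bd i (Finset.mem_Ioc.1 hi).1
  have hball_im : ∀ᵐ ω ∂μ, ∀ i ∈ (↑(Finset.Ioc 0 k) : Set ℕ), |Yim i ω| ≤ b := by
    rw [ae_ball_iff (Finset.Ioc 0 k : Finset ℕ).countable_toSet]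
    intro i hi
    exact hYim_bd i (Finset.mem_Ioc.1 hi).1
  have hsupbd : ∀ (Z : ℕ → Ω → ℝ) (ω : Ω), (∀ i ∈ (↑(Finset.Ioc 0 k) : Set ℕ), |Z i ω| ≤ b) →
      ∀ w ∈ Finset.range (k+1), |∑ i ∈ Finset.Ioc 0 w, Z i ω| ≤ (k:ℝ)*b := by
    intro Z ω hω w hw
    have hwk : w ≤ k := by have := Finset.mem_range.1 hw; omega
    calc |∑ i ∈ Finset.Ioc 0 w, Z i ω| ≤ ∑ i ∈ Finset.Ioc 0 w, |Z i ω| :=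
          Finset.abs_sum_le_sum_abs _ _
      _ ≤ ∑ _i ∈ Finset.Ioc 0 w, b := Finset.sum_le_sum fun i hi =>
          hω i (Finset.Ioc_subset_Ioc le_rfl hwk hi)
      _ = (Finset.Ioc 0 w).card * b := by rw [Finset.sum_const, nsmul_eq_mul]
      _ ≤ (k:ℝ) * b := by
          refine mul_le_mul_of_nonneg_right ?_ hbpos.le
          simp [Nat.card_Ioc]
          exact_mod_cast hwk
  have hMRB : ∀ᵐ ω ∂μ, MR ω ≤ (k:ℝ)*b := by
    filter_upwards [hball_re] with ω hω
    rw [hMR, Finset.sup'_le_iff]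
    exact hsupbd Yre ω hω
  have hMIB : ∀ᵐ ω ∂μ, MI ω ≤ (k:ℝ)*b := by
    filter_upwards [hball_im] with ω hω
    rw [hMI, Finset.sup'_le_iff]
    exact hsupbd Yim ω hω
  have hMRmeas : Measurable MR := by
    have h1 : Measurable ((Finset.range (k+1)).sup'
        (Finset.nonempty_range_iff.2 (Nat.succ_ne_zero k))
        (fun w ω => |∑ i ∈ Finset.Ioc 0 w, Yre i ω|)) :=
      Finset.measurable_sup' _ fun w _ =>
        (Finset.measurable_sum _ fun i _ => hYre_meas i).abs
    have h2 : MR = (Finset.range (k+1)).sup'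
        (Finset.nonempty_range_iff.2 (Nat.succ_ne_zero k))
        (fun w ω => |∑ i ∈ Finset.Ioc 0 w, Yre i ω|) := by
      funext ω
      rw [hMR, Finset.sup'_apply]
    rw [h2]
    exact h1
  have hMImeas : Measurable MI := by
    have h1 : Measurable ((Finset.range (k+1)).sup'
        (Finset.nonempty_range_iff.2 (Nat.succ_ne_zero k))
        (fun w ω => |∑ i ∈ Finset.Ioc 0 w, Yim i ω|)) :=
      Finset.measurable_sup' _ fun w _ =>
        (Finset.measurable_sum _ fun i _ => hYim_meas i).abs
    have h2 : MI = (Finset.range (k+1)).sup'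
        (Finset.nonempty_range_iff.2 (Nat.succ_ne_zero k))
        (fun w ω => |∑ i ∈ Finset.Ioc 0 w, Yim i ω|) := by
      funext ω
      rw [hMI, Finset.sup'_apply]
    rw [h2]
    exact h1
  -- integrability
  have hintMRp : Integrable (fun ω => MR ω ^ p) μ := by
    refine Integrable.mono' (integrable_const (((k:ℝ)*b)^p))
      ((Real.continuous_rpow_const hp0.le).measurable.comp hMRmeas).aestronglyMeasurable ?_
    filter_upwards [hMRB] with ω h
    rw [Real.norm_eq_abs, abs_of_nonneg (Real.rpow_nonneg (hMR0 ω) p)]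
    exact Real.rpow_le_rpow (hMR0 ω) h hp0.le
  have hintMIp : Integrable (fun ω => MI ω ^ p) μ := by
    refine Integrable.mono' (integrable_const (((k:ℝ)*b)^p))
      ((Real.continuous_rpow_const hp0.le).measurable.comp hMImeas).aestronglyMeasurable ?_
    filter_upwards [hMIB] with ω h
    rw [Real.norm_eq_abs, abs_of_nonneg (Real.rpow_nonneg (hMI0 ω) p)]
    exact Real.rpow_le_rpow (hMI0 ω) h hp0.le
  have hint2p : Integrable (fun ω => (2*(MR ω + MI ω))^p) μ := by
    refine Integrable.mono' (integrable_const ((2*((k:ℝ)*b + (k:ℝ)*b))^p))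
      (((Real.continuous_rpow_const hp0.le).measurable.comp ((hMRmeas.add hMImeas).const_mul 2)).aestronglyMeasurable) ?_
    filter_upwards [hMRB, hMIB] with ω h1 h2
    have hbase : 0 ≤ 2*(MR ω + MI ω) := by
      have := hMR0 ω; have := hMI0 ω; linarith
    rw [Real.norm_eq_abs, abs_of_nonneg (Real.rpow_nonneg hbase p)]
    exact Real.rpow_le_rpow hbase (by linarith) hp0.le
  -- step 1 : dominate the sSup integral
  have h1 : (∫ ω, sSup { r : ℝ | ∃ u v : ℕ, u ≤ v ∧ v ≤ k ∧
      r = ‖∑ i ∈ Finset.Ioc u v, (X i ω - ∫ ω', X i ω' ∂μ)‖ ^ p } ∂μ)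
      ≤ ∫ ω, (2*(MR ω + MI ω))^p ∂μ := by
    refine integral_mono_of_nonneg ?_ hint2p (Filter.Eventually.of_forall hpt)
    filter_upwards with ω
    refine Real.sSup_nonneg ?_
    rintro r ⟨u, v, _, _, rfl⟩
    exact Real.rpow_nonneg (norm_nonneg _) p
  -- step 2 : split into the two maxima
  have hsplit2 : ∀ a a' : ℝ, 0 ≤ a → 0 ≤ a' → (2*(a+a'))^p ≤ 4^p * (a^p + a'^p) := by
    intro a a' ha ha'
    rcases le_total a a' with h | h
    · calc (2*(a+a'))^p ≤ (4*a')^p :=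
            Real.rpow_le_rpow (by linarith) (by linarith) hp0.le
        _ = 4^p * a'^p := Real.mul_rpow (by norm_num) ha'
        _ ≤ 4^p * (a^p + a'^p) := by
            refine mul_le_mul_of_nonneg_left ?_ (Real.rpow_nonneg (by norm_num) p)
            have := Real.rpow_nonneg ha p
            linarith
    · calc (2*(a+a'))^p ≤ (4*a)^p :=
            Real.rpow_le_rpow (by linarith) (by linarith) hp0.le
        _ = 4^p * a^p := Real.mul_rpow (by norm_num) ha
        _ ≤ 4^p * (a^p + a'^p) := by
            refine mul_le_mul_of_nonneg_left ?_ (Real.rpow_nonneg (by norm_num) p)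
            have := Real.rpow_nonneg ha' p
            linarith
  have h2 : (∫ ω, (2*(MR ω + MI ω))^p ∂μ)
      ≤ 4^p * ((∫ ω, MR ω ^ p ∂μ) + ∫ ω, MI ω ^ p ∂μ) := by
    calc (∫ ω, (2*(MR ω + MI ω))^p ∂μ)
        ≤ ∫ ω, 4^p * (MR ω ^ p + MI ω ^ p) ∂μ := by
          refine integral_mono hint2p (((hintMRp.add hintMIp)).const_mul _) fun ω => ?_
          exact hsplit2 (MR ω) (MI ω) (hMR0 ω) (hMI0 ω)
      _ = 4^p * ((∫ ω, MR ω ^ p ∂μ) + ∫ ω, MI ω ^ p ∂μ) := by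
          rw [MeasureTheory.integral_const_mul, integral_add hintMRp hintMIp]
  -- step 3 : apply the key moment bound to real and imaginary parts
  have h3re : ∫ ω, MR ω ^ p ∂μ ≤ 6 * 4^p * p^(p/2) * (2 * Real.sqrt k * b)^p :=
    aux_lemA μ Yre hYre_meas hYre_ind b hbpos hYre_bd hYre_mean k hk p hp.le
  have h3im : ∫ ω, MI ω ^ p ∂μ ≤ 6 * 4^p * p^(p/2) * (2 * Real.sqrt k * b)^p :=
    aux_lemA μ Yim hYim_meas hYim_ind b hbpos hYim_bd hYim_mean k hk p hp.le
  -- arithmetic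
  have hk0 : (0:ℝ) ≤ (k:ℝ) := Nat.cast_nonneg k
  have hτp : (2 * Real.sqrt k * b)^p = 4^p * (k:ℝ)^(p/2) * σ^p := by
    have hb2 : 2 * Real.sqrt k * b = 4 * (Real.sqrt k * σ) := by rw [hb]; ring
    rw [hb2, Real.mul_rpow (by norm_num) (by positivity),
      Real.mul_rpow (Real.sqrt_nonneg _) hσpos.le,
      show Real.sqrt (k:ℝ) = (k:ℝ) ^ (1/2:ℝ) from Real.sqrt_eq_rpow _,
      ← Real.rpow_mul hk0, show (1/2:ℝ)*p = p/2 by ring]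
    ring
  have hσp : σ^p = (2:ℝ) ^ (-(j:ℝ) * p / 2) := by
    rw [hσ, ← Real.rpow_mul (by norm_num : (0:ℝ) ≤ 2)]
    congr 1
    ring
  have h4p : (0:ℝ) ≤ (4:ℝ)^p := Real.rpow_nonneg (by norm_num) p
  have hkp : (0:ℝ) ≤ (k:ℝ)^(p/2) := Real.rpow_nonneg hk0 _
  have hpp : (0:ℝ) ≤ p^(p/2) := Real.rpow_nonneg hp0.le _
  have h2p : (0:ℝ) ≤ (2:ℝ)^(-(j:ℝ) * p / 2) := Real.rpow_nonneg (by norm_num) _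
  have hconst : 12 * ((4:ℝ)^p * 4^p * 4^p) ≤ (256:ℝ)^p := by
    have h256 : (256:ℝ)^p = 4^p * (4^p * 4^p * 4^p) := by
      rw [← Real.mul_rpow (by norm_num) (by norm_num),
        ← Real.mul_rpow (by norm_num) (by norm_num),
        ← Real.mul_rpow (by norm_num) (by norm_num)]
      norm_num
    have h12 : (12:ℝ) ≤ 4^p := by
      calc (12:ℝ) ≤ 16 := by norm_num
        _ = (4:ℝ)^(2:ℝ) := by
            rw [show ((2:ℝ)) = ((2:ℕ):ℝ) by norm_num, Real.rpow_natCast]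
            norm_num
        _ ≤ (4:ℝ)^p := by
            exact Real.rpow_le_rpow_left_iff (by norm_num : (1:ℝ) < 4) |>.2 hp.le
    rw [h256]
    calc 12 * ((4:ℝ)^p * 4^p * 4^p) ≤ 4^p * ((4:ℝ)^p * 4^p * 4^p) := by
          refine mul_le_mul_of_nonneg_right h12 ?_
          positivity
      _ = 4^p * (4^p * 4^p * 4^p) := by ring
  calc (∫ ω, sSup { r : ℝ | ∃ u v : ℕ, u ≤ v ∧ v ≤ k ∧
        r = ‖∑ i ∈ Finset.Ioc u v, (X i ω - ∫ ω', X i ω' ∂μ)‖ ^ p } ∂μ)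
      ≤ 4^p * ((∫ ω, MR ω ^ p ∂μ) + ∫ ω, MI ω ^ p ∂μ) := le_trans h1 h2
    _ ≤ 4^p * ((6 * 4^p * p^(p/2) * (2 * Real.sqrt k * b)^p)
          + (6 * 4^p * p^(p/2) * (2 * Real.sqrt k * b)^p)) := by
        refine mul_le_mul_of_nonneg_left (add_le_add h3re h3im) h4p
    _ = 12 * ((4:ℝ)^p * 4^p * 4^p) * ((k:ℝ)^(p/2) * (p^(p/2) * σ^p)) := by
        rw [hτp]
        ring
    _ ≤ (256:ℝ)^p * ((k:ℝ)^(p/2) * (p^(p/2) * σ^p)) := by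
        refine mul_le_mul_of_nonneg_right hconst ?_
        have hσpp : (0:ℝ) ≤ σ^p := Real.rpow_nonneg hσpos.le p
        positivity
    _ = (256:ℝ) ^ p * (k : ℝ) ^ (p / 2) * p ^ (p / 2) * (2:ℝ) ^ (-(j:ℝ) * p / 2) := by
        rw [hσp]
        ring
end
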